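/- arXiv:0909.4003 — 4 statements merged into one kernel-verified Lean document; each statement's English description precedes it below -/
import Mathlib

section
/- Let o be a commutative ring, B a topological group, B_0 an open subgroup of B. Let V be a smooth representation of B over o with a finite presentation ind_{B_0}^B(V_0) -> V. Let W_0 be an o[B_0]-submodule of ind_{B_0}^B(V_0), finitely generated over o[B_0] and containing [1, V_0], and let W_0' be the image of W_0 in V. Then W_0' generates V and the associated presentation ind_{B_0}^B(W_0') -> V is also finite. -/
noncomputable section
attribute [local instance] Classical.propDecidable
open Pointwise


/-! ### Generalities on smooth representations over a commutative ring `o` -/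

section RepPrelim

variable (o : Type) [CommRing o]

/-- The `o`-submodule of `V` generated by `{s • w | s ∈ S, w ∈ W}`; written `<S W>` in the paper. -/
def gspan {H : Type} (V : Type) [AddCommGroup V] [Module o V] [SMul H V]
    (S : Set H) (W : Set V) : Submodule o V :=
  Submodule.span o {v : V | ∃ s ∈ S, ∃ w ∈ W, v = s • w}

/-- A submodule `N` is stable under the set `S` of group elements. -/
def IsStableSub {H : Type} (V : Type) [AddCommGroup V] [Module o V] [SMul H V]
    (S : Set H) (N : Submodule o V) : Prop :=
  ∀ s ∈ S, ∀ v ∈ N, s • v ∈ N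

/-- `N` is a finitely generated module over `o[S]`. -/
def IsFGOver {H : Type} (V : Type) [AddCommGroup V] [Module o V] [SMul H V]
    (S : Set H) (N : Submodule o V) : Prop :=
  ∃ X : Finset V, (X : Set V) ⊆ (N : Set V) ∧ N = gspan o V S (X : Set V)

/-- The submodule of `S`-invariants. -/
def invariantsSub (H : Type) [Group H] (V : Type) [AddCommGroup V] [Module o V]
    [DistribMulAction H V] [SMulCommClass H o V] (S : Set H) : Submodule o V where
  carrier := {v | ∀ s ∈ S, s • v = v}
  add_mem' := by intro a b ha hb s hs; rw [smul_add, ha s hs, hb s hs]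
  zero_mem' := by intro s hs; exact smul_zero s
  smul_mem' := by intro c v hv s hs; rw [smul_comm, hv s hs]

/-- The action of a fixed group element as an `o`-linear map. -/
def actLin (H : Type) [Group H] (V : Type) [AddCommGroup V] [Module o V]
    [DistribMulAction H V] [SMulCommClass H o V] (g : H) : V →ₗ[o] V where
  toFun v := g • v
  map_add' := smul_add g
  map_smul' c v := by simpa using smul_comm g c v

/-- `V` has finite length as an `o[H]`-module: it admits a composition series of
`H`-stable `o`-submodules. -/
def IsFiniteLengthRep (H : Type) [Group H] (V : Type) [AddCommGroup V] [Module o V]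
    [DistribMulAction H V] : Prop :=
  ∃ (n : ℕ) (c : Fin (n + 1) → Submodule o V),
    c 0 = ⊥ ∧ c (Fin.last n) = ⊤ ∧
    (∀ i, IsStableSub o V (Set.univ : Set H) (c i)) ∧
    (∀ i : Fin n, c i.castSucc < c i.succ) ∧
    (∀ i : Fin n, ∀ N : Submodule o V, IsStableSub o V (Set.univ : Set H) N →
      c i.castSucc ≤ N → N ≤ c i.succ → N = c i.castSucc ∨ N = c i.succ)

/-- Smoothness: each vector has open stabilizer. -/
def IsSmoothRep (H : Type) [Group H] [TopologicalSpace H] (V : Type) [AddCommGroup V]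
    [Module o V] [DistribMulAction H V] : Prop :=
  ∀ v : V, IsOpen {h : H | h • v = v}

/-- Admissibility: invariants under any compact open subgroup form a f.g. `o`-module. -/
def IsAdmissibleRep (H : Type) [Group H] [TopologicalSpace H] (V : Type) [AddCommGroup V]
    [Module o V] [DistribMulAction H V] [SMulCommClass H o V] : Prop :=
  ∀ H' : Subgroup H, IsCompact (H' : Set H) → IsOpen (H' : Set H) →
    (invariantsSub o H V (H' : Set H)).FG

end RepPrelim

/-! ### Compact induction `ind_{S}^{H}(V₀)` and finite presentations -/

section Induction

variable (o : Type) [CommRing o]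
variable {H : Type} [Group H] {V : Type} [AddCommGroup V] [Module o V]
variable [DistribMulAction H V] [SMulCommClass H o V]

/-- The compact induction `ind_S^H (V₀)`, realized as the `o`-module of functions
`f : H → V` with values in `V₀`, satisfying `f (s * h) = s • f h` for `s ∈ S`, and
supported on finitely many right cosets `S * x`. -/
def Ind (S : Subgroup H) (V0 : Submodule o V) : Submodule o (H → V) where
  carrier := {f | (∀ h, f h ∈ V0) ∧ (∀ s ∈ S, ∀ h, f (s * h) = s • f h) ∧
      ∃ X : Finset H, ∀ h, f h ≠ 0 → ∃ s ∈ S, ∃ x ∈ X, h = s * x}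
  add_mem' := by
    rintro f g ⟨hf1, hf2, Xf, hXf⟩ ⟨hg1, hg2, Xg, hXg⟩
    refine ⟨fun h => V0.add_mem (hf1 h) (hg1 h),
      fun s hs h => by simp only [Pi.add_apply, hf2 s hs h, hg2 s hs h, smul_add],
      Xf ∪ Xg, fun h hh => ?_⟩
    by_cases hf : f h = 0
    · have hg : g h ≠ 0 := fun h0 => hh (by simp [Pi.add_apply, hf, h0])
      obtain ⟨s, hs, x, hx, hxx⟩ := hXg h hg
      exact ⟨s, hs, x, Finset.mem_union_right _ hx, hxx⟩
    · obtain ⟨s, hs, x, hx, hxx⟩ := hXf h hf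
      exact ⟨s, hs, x, Finset.mem_union_left _ hx, hxx⟩
  zero_mem' :=
    ⟨fun _ => V0.zero_mem, fun s _ _ => (smul_zero s).symm, ∅, fun h hh => absurd rfl hh⟩
  smul_mem' := by
    rintro c f ⟨hf1, hf2, Xf, hXf⟩
    refine ⟨fun h => V0.smul_mem c (hf1 h),
      fun s hs h => by
        simp only [Pi.smul_apply, hf2 s hs h]
        exact (smul_comm s c (f h)).symm,
      Xf, fun h hh => hXf h (fun h0 => hh (by simp [Pi.smul_apply, h0]))⟩

variable {S : Subgroup H} {V0 : Submodule o V}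

/-- Right translation, giving the `H`-action on the compact induction. -/
def indTrans (g : H) (f : H → V) : H → V := fun h => f (h * g)

lemma indTrans_mem (g : H) {f : H → V} (hf : f ∈ Ind o S V0) : indTrans g f ∈ Ind o S V0 := by
  obtain ⟨h1, h2, X, hX⟩ := hf
  refine ⟨fun h => h1 _, fun s hs h => by
      simpa [indTrans, mul_assoc] using h2 s hs (h * g),
    X.image (· * g⁻¹), fun h hh => ?_⟩
  obtain ⟨s, hs, x, hx, hxx⟩ := hX (h * g) hh
  refine ⟨s, hs, x * g⁻¹, Finset.mem_image_of_mem _ hx, ?_⟩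
  rw [← mul_assoc, ← hxx, mul_assoc, mul_inv_cancel, mul_one]

instance : SMul H (Ind o S V0) :=
  ⟨fun g f => ⟨indTrans g (f : H → V), indTrans_mem o g f.2⟩⟩

lemma ind_smul_apply (g : H) (f : Ind o S V0) (h : H) :
    ((g • f : Ind o S V0) : H → V) h = (f : H → V) (h * g) := rfl

instance : MulAction H (Ind o S V0) where
  one_smul f := Subtype.ext (funext fun h => by simp [ind_smul_apply])
  mul_smul g1 g2 f := Subtype.ext (funext fun h => by simp [ind_smul_apply, mul_assoc])

instance : DistribMulAction H (Ind o S V0) where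
  smul_add g f1 f2 := Subtype.ext (funext fun h => rfl)
  smul_zero g := Subtype.ext (funext fun h => rfl)

instance : SMulCommClass H o (Ind o S V0) :=
  ⟨fun g c f => Subtype.ext (funext fun h => rfl)⟩

/-- The function `[1, v]` supported on `S`, with value `v` at `1`. -/
def unitFn (S : Subgroup H) (v : V) : H → V := fun h => if h ∈ S then h • v else 0

lemma unitFn_mem (hst : IsStableSub o V (S : Set H) V0) {v : V} (hv : v ∈ V0) :
    unitFn S v ∈ Ind o S V0 := by
  refine ⟨fun h => ?_, fun s hs h => ?_, {1}, fun h hh => ?_⟩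
  · by_cases h1 : h ∈ S
    · simpa [unitFn, h1] using hst h h1 v hv
    · simp [unitFn, h1, V0.zero_mem]
  · by_cases h1 : h ∈ S
    · have hsh : s * h ∈ S := S.mul_mem hs h1
      simp [unitFn, h1, hsh, mul_smul]
    · have hsh : s * h ∉ S := fun hc => h1 (by simpa using S.mul_mem (S.inv_mem hs) hc)
      simp [unitFn, h1, hsh]
  · by_cases h1 : h ∈ S
    · exact ⟨h, h1, 1, Finset.mem_singleton_self 1, (mul_one h).symm⟩
    · simp [unitFn, h1] at hh

/-- The element `[1, v]` of the compact induction. -/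
def unitElt (hst : IsStableSub o V (S : Set H) V0) {v : V} (hv : v ∈ V0) : Ind o S V0 :=
  ⟨unitFn S v, unitFn_mem o hst hv⟩

/-- `P` is the natural presentation map `ind_S^H (V₀) → V`: it is `H`-equivariant and sends
`[1, v]` to `v`. -/
def IsPresMap (hst : IsStableSub o V (S : Set H) V0) (P : Ind o S V0 →ₗ[o] V) : Prop :=
  (∀ (g : H) (f : Ind o S V0), P (g • f) = g • P f) ∧
  (∀ v (hv : v ∈ V0), P (unitElt o hst hv) = v)

end Induction

/-- `V₀ ⊆ V` yields a finite presentation `ind_S^H (V₀) → V`: `V₀` is an `S`-stable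
`o`-submodule, finitely generated over `o[S]`, generating `V` over `o[H]`, and the kernel of
the natural presentation map is finitely generated over `o[H]`. -/
def FinitelyPresentedVia (o : Type) [CommRing o] {H : Type} [Group H] {V : Type}
    [AddCommGroup V] [Module o V] [DistribMulAction H V] [SMulCommClass H o V]
    (S : Subgroup H) (V0 : Submodule o V) : Prop :=
  ∃ hst : IsStableSub o V (S : Set H) V0,
    IsFGOver o V (S : Set H) V0 ∧ gspan o V (Set.univ : Set H) (V0 : Set V) = ⊤ ∧
    ∃ P : Ind o S V0 →ₗ[o] V, IsPresMap o hst P ∧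
      IsFGOver o (Ind o S V0) (Set.univ : Set H) (LinearMap.ker P)

/-- `V` is of finite presentation relative to the open subgroup `S`. -/
def HasFinitePres (o : Type) [CommRing o] {H : Type} [Group H] (V : Type)
    [AddCommGroup V] [Module o V] [DistribMulAction H V] [SMulCommClass H o V]
    (S : Subgroup H) : Prop :=
  ∃ V0 : Submodule o V, FinitelyPresentedVia o S V0


/-! ### Auxiliary lemmas for Statement 7 -/

section AuxGspan

variable (o : Type) [CommRing o]
variable {H : Type} [Group H] {V : Type} [AddCommGroup V] [Module o V]
variable [DistribMulAction H V] [SMulCommClass H o V]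

lemma aux_gspan_mono {S : Set H} {W W' : Set V} (h : W ⊆ W') :
    gspan o V S W ≤ gspan o V S W' :=
  Submodule.span_mono (by rintro v ⟨s, hs, w, hw, rfl⟩; exact ⟨s, hs, w, h hw, rfl⟩)

lemma aux_smul_mem_gspan_univ {W : Set V} (g : H) {v : V}
    (hv : v ∈ gspan o (H := H) V Set.univ W) :
    g • v ∈ gspan o (H := H) V Set.univ W := by
  have hmap : Submodule.map (actLin o H V g) (gspan o (H := H) V Set.univ W) ≤
      gspan o (H := H) V Set.univ W := by
    rw [gspan, Submodule.map_span, Submodule.span_le]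
    rintro x ⟨y, ⟨s, -, w, hw, rfl⟩, rfl⟩
    exact Submodule.subset_span ⟨g * s, trivial, w, hw, (mul_smul g s w).symm⟩
  exact hmap ⟨v, hv, rfl⟩

lemma aux_map_gspan {V' : Type} [AddCommGroup V'] [Module o V'] [DistribMulAction H V']
    [SMulCommClass H o V'] (F : V →ₗ[o] V') {S : Set H}
    (hF : ∀ s ∈ S, ∀ v : V, F (s • v) = s • F v) (W : Set V) :
    Submodule.map F (gspan o V S W) = gspan o V' S (F '' W) := by
  rw [gspan, Submodule.map_span, gspan]
  congr 1
  ext x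
  constructor
  · rintro ⟨y, ⟨s, hs, w, hw, rfl⟩, rfl⟩
    exact ⟨s, hs, F w, ⟨w, hw, rfl⟩, hF s hs w⟩
  · rintro ⟨s, hs, _, ⟨w, hw, rfl⟩, rfl⟩
    exact ⟨s • w, ⟨s, hs, w, hw, rfl⟩, hF s hs w⟩

end AuxGspan

section AuxInd

variable (o : Type) [CommRing o]
variable {H : Type} [Group H] {V : Type} [AddCommGroup V] [Module o V]
variable [DistribMulAction H V] [SMulCommClass H o V]
variable {S : Subgroup H} {V0 : Submodule o V}

lemma aux_mem_Ind_iff {f : H → V} :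
    f ∈ Ind o S V0 ↔ ((∀ h, f h ∈ V0) ∧ (∀ s ∈ S, ∀ h, f (s * h) = s • f h) ∧
      ∃ X : Finset H, ∀ h, f h ≠ 0 → ∃ s ∈ S, ∃ x ∈ X, h = s * x) :=
  Iff.rfl

lemma aux_ind_val_mem (f : ↥(Ind o S V0)) (h : H) : (f : H → V) h ∈ V0 :=
  ((aux_mem_Ind_iff o).mp f.2).1 h

lemma aux_ind_equivar (f : ↥(Ind o S V0)) {s : H} (hs : s ∈ S) (h : H) :
    (f : H → V) (s * h) = s • (f : H → V) h :=
  ((aux_mem_Ind_iff o).mp f.2).2.1 s hs h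

lemma aux_ind_supp (f : ↥(Ind o S V0)) :
    ∃ X : Finset H, ∀ h, (f : H → V) h ≠ 0 → ∃ s ∈ S, ∃ x ∈ X, h = s * x :=
  ((aux_mem_Ind_iff o).mp f.2).2.2

lemma aux_unitElt_coe (hst : IsStableSub o V (S : Set H) V0) {v : V} (hv : v ∈ V0) (h : H) :
    (unitElt o hst hv : H → V) h = if h ∈ S then h • v else 0 := rfl

/-- The set of all "unit elements" `[1,v]`, `v ∈ V₀`. -/
def unitSet (hst : IsStableSub o V (S : Set H) V0) : Set ↥(Ind o S V0) :=
  {u | ∃ v, ∃ hv : v ∈ V0, u = unitElt o hst hv}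

/-- Every element of the compact induction is an `o[H]`-combination of unit elements. -/
lemma aux_decomp (hst : IsStableSub o V (S : Set H) V0) (f : ↥(Ind o S V0)) :
    f ∈ gspan o (↥(Ind o S V0)) (Set.univ : Set H) (unitSet o hst) := by
  suffices Hmain : ∀ (X : Finset H) (f : ↥(Ind o S V0)),
      (∀ h, (f : H → V) h ≠ 0 → ∃ s ∈ S, ∃ x ∈ X, h = s * x) →
      f ∈ gspan o (↥(Ind o S V0)) (Set.univ : Set H) (unitSet o hst) by
    obtain ⟨X, hX⟩ := aux_ind_supp o f
    exact Hmain X f hX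
  intro X
  induction X using Finset.induction_on with
  | empty =>
    intro f hf
    have hf0 : f = 0 := by
      apply Subtype.ext; funext h
      by_contra hne
      obtain ⟨s, -, x, hx, -⟩ := hf h hne
      exact absurd hx (Finset.notMem_empty x)
    rw [hf0]; exact Submodule.zero_mem _
  | @insert a X ha ih =>
    intro f hf
    set g : ↥(Ind o S V0) := a⁻¹ • unitElt o hst (aux_ind_val_mem o f a) with hgdef
    have hgval : ∀ h, (g : H → V) h =
        if h * a⁻¹ ∈ S then (h * a⁻¹) • (f : H → V) a else 0 := fun h => rfl
    have hsub : ∀ h, ((f - g : ↥(Ind o S V0)) : H → V) h ≠ 0 → ∃ s ∈ S, ∃ x ∈ X, h = s * x := by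
      intro h hne
      have hval : ((f - g : ↥(Ind o S V0)) : H → V) h = (f : H → V) h - (g : H → V) h := rfl
      by_cases hmem : h * a⁻¹ ∈ S
      · exfalso
        apply hne
        rw [hval, hgval, if_pos hmem]
        have he : (f : H → V) h = (h * a⁻¹) • (f : H → V) a := by
          conv_lhs => rw [show h = (h * a⁻¹) * a by group]
          exact aux_ind_equivar o f hmem a
        rw [he, sub_self]
      · have hfne : (f : H → V) h ≠ 0 := by
          intro h0
          apply hne
          rw [hval, hgval, if_neg hmem, h0, sub_zero]
        obtain ⟨s, hs, x, hx, rfl⟩ := hf h hfne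
        rcases Finset.mem_insert.mp hx with rfl | hx'
        · exact absurd (by simpa using hs) hmem
        · exact ⟨s, hs, x, hx', rfl⟩
    have h1 : (f - g : ↥(Ind o S V0)) ∈ gspan o _ (Set.univ : Set H) (unitSet o hst) :=
      ih _ hsub
    have h2 : g ∈ gspan o (↥(Ind o S V0)) (Set.univ : Set H) (unitSet o hst) := by
      apply aux_smul_mem_gspan_univ
      exact Submodule.subset_span
        ⟨1, trivial, _, ⟨_, aux_ind_val_mem o f a, rfl⟩, (one_smul H _).symm⟩
    have : f = (f - g) + g := by abel
    rw [this]
    exact Submodule.add_mem _ h1 h2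

/-- Two equivariant linear maps agreeing on unit elements agree everywhere. -/
lemma aux_presmap_unique {V' : Type} [AddCommGroup V'] [Module o V']
    [DistribMulAction H V'] [SMulCommClass H o V']
    (hst : IsStableSub o V (S : Set H) V0) (Φ Ψ : ↥(Ind o S V0) →ₗ[o] V')
    (hΦ : ∀ (g : H) (f : ↥(Ind o S V0)), Φ (g • f) = g • Φ f)
    (hΨ : ∀ (g : H) (f : ↥(Ind o S V0)), Ψ (g • f) = g • Ψ f)
    (hu : ∀ v (hv : v ∈ V0), Φ (unitElt o hst hv) = Ψ (unitElt o hst hv)) :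
    ∀ f, Φ f = Ψ f := by
  intro f
  have hmem := aux_decomp o hst f
  refine Submodule.span_induction ?_ ?_ ?_ ?_ hmem
  · rintro x ⟨s, -, u, ⟨v, hv, rfl⟩, rfl⟩
    rw [hΦ, hΨ, hu]
  · simp
  · intro x y _ _ hx hy; rw [map_add, map_add, hx, hy]
  · intro c x _ hx; rw [map_smul, map_smul, hx]

end AuxInd

section AuxPres

variable (o : Type) [CommRing o]
variable {H : Type} [Group H] {V : Type} [AddCommGroup V] [Module o V]
variable [DistribMulAction H V] [SMulCommClass H o V]
variable {S : Subgroup H} {V0 : Submodule o V}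

/-- The set of right cosets `S\H`, as a quotient of `H`. -/
def CQ (S : Subgroup H) : Type := Quot (fun h h' : H => h * h'⁻¹ ∈ S)

/-- The quotient map `H → S\H`. -/
def CQmk (S : Subgroup H) : H → CQ S := Quot.mk _

/-- The coset-wise term `h⁻¹ • f h` of the natural presentation map, as a function on
cosets. -/
def presMapFn (f : ↥(Ind o S V0)) : CQ S → V :=
  Quot.lift (fun h => h⁻¹ • (f : H → V) h) (by
    intro h h' hr
    show h⁻¹ • (f : H → V) h = h'⁻¹ • (f : H → V) h'
    have he : (f : H → V) h = (h * h'⁻¹) • (f : H → V) h' := by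
      conv_lhs => rw [show h = (h * h'⁻¹) * h' by group]
      exact aux_ind_equivar o f hr h'
    rw [he, smul_smul]
    congr 1
    group)

lemma presMapFn_mk (f : ↥(Ind o S V0)) (h : H) :
    presMapFn o f (CQmk S h) = h⁻¹ • (f : H → V) h := rfl

lemma presMapFn_support_finite (f : ↥(Ind o S V0)) :
    (Function.support (presMapFn o f)).Finite := by
  obtain ⟨X, hX⟩ := aux_ind_supp o f
  apply Set.Finite.subset (X.finite_toSet.image (CQmk S))
  intro q hq
  obtain ⟨h, rfl⟩ : ∃ h, CQmk S h = q := Quot.exists_rep q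
  have hne : (f : H → V) h ≠ 0 := by
    intro h0
    apply hq
    show presMapFn o f (CQmk S h) = 0
    rw [presMapFn_mk, h0, smul_zero]
  obtain ⟨s, hs, x, hx, rfl⟩ := hX h hne
  exact ⟨x, hx, (Quot.sound (by simpa using hs)).symm⟩

/-- The natural presentation map `ind_S^H(V₀) → V`, `f ↦ Σ_{Sx} x⁻¹ • f x`. -/
def presMap : ↥(Ind o S V0) →ₗ[o] V where
  toFun f := ∑ᶠ q, presMapFn o f q
  map_add' f g := by
    have he : presMapFn o (f + g) = presMapFn o f + presMapFn o g := by
      funext q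
      induction q using Quot.ind with
      | mk h =>
        show h⁻¹ • ((f + g : ↥(Ind o S V0)) : H → V) h = _
        have : ((f + g : ↥(Ind o S V0)) : H → V) h = (f : H → V) h + (g : H → V) h := rfl
        rw [this, smul_add]; rfl
    show (∑ᶠ q, presMapFn o (f + g) q) = (∑ᶠ q, presMapFn o f q) + ∑ᶠ q, presMapFn o g q
    rw [he]
    simp only [Pi.add_apply]
    exact finsum_add_distrib (presMapFn_support_finite o f) (presMapFn_support_finite o g)
  map_smul' c f := by
    have he : presMapFn o (c • f) = fun q => c • presMapFn o f q := by
      funext q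
      induction q using Quot.ind with
      | mk h =>
        show h⁻¹ • ((c • f : ↥(Ind o S V0)) : H → V) h = c • (h⁻¹ • (f : H → V) h)
        have : ((c • f : ↥(Ind o S V0)) : H → V) h = c • (f : H → V) h := rfl
        rw [this, smul_comm]
    show (∑ᶠ q, presMapFn o (c • f) q) = c • ∑ᶠ q, presMapFn o f q
    rw [he]
    exact (smul_finsum' c (presMapFn_support_finite o f)).symm

/-- Right translation by `g` on the coset space. -/
def cqShift (S : Subgroup H) (g : H) : CQ S → CQ S :=
  Quot.lift (fun h => CQmk S (h * g))
    (fun h h' hr => Quot.sound (by simpa [mul_assoc] using hr))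

lemma presMap_equivar (g : H) (f : ↥(Ind o S V0)) :
    presMap o (g • f) = g • presMap o f := by
  have hστ : ∀ q, cqShift S g⁻¹ (cqShift S g q) = q := by
    intro q; induction q using Quot.ind with
    | mk h => show CQmk S (h * g * g⁻¹) = CQmk S h; rw [mul_inv_cancel_right]
  have hτσ : ∀ q, cqShift S g (cqShift S g⁻¹ q) = q := by
    intro q; induction q using Quot.ind with
    | mk h => show CQmk S (h * g⁻¹ * g) = CQmk S h; rw [inv_mul_cancel_right]
  have hbij : Function.Bijective (cqShift S g) :=
    Function.bijective_iff_has_inverse.mpr ⟨cqShift S g⁻¹, hστ, hτσ⟩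
  have hcomp : ∀ q, presMapFn o (g • f) q = g • presMapFn o f (cqShift S g q) := by
    intro q; induction q using Quot.ind with
    | mk h =>
      show h⁻¹ • ((g • f : ↥(Ind o S V0)) : H → V) h = g • ((h * g)⁻¹ • (f : H → V) (h * g))
      rw [ind_smul_apply, smul_smul]
      congr 1
      group
  show (∑ᶠ q, presMapFn o (g • f) q) = g • ∑ᶠ q, presMapFn o f q
  calc (∑ᶠ q, presMapFn o (g • f) q)
      = ∑ᶠ q, g • presMapFn o f q := finsum_eq_of_bijective (cqShift S g) hbij hcomp
    _ = g • ∑ᶠ q, presMapFn o f q :=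
        ((DistribMulAction.toAddMonoidHom V g).map_finsum
          (presMapFn_support_finite o f)).symm

lemma presMap_unit (hst : IsStableSub o V (S : Set H) V0) (v : V) (hv : v ∈ V0) :
    presMap o (unitElt o hst hv) = v := by
  have hz : ∀ q, q ≠ CQmk S 1 → presMapFn o (unitElt o hst hv) q = 0 := by
    intro q
    induction q using Quot.ind with
    | mk h =>
      intro hq
      by_cases hS : h ∈ S
      · exact absurd (Quot.sound (by simpa using hS)) hq
      · show h⁻¹ • (if h ∈ S then h • v else 0) = 0
        rw [if_neg hS, smul_zero]
  show ∑ᶠ q, presMapFn o (unitElt o hst hv) q = v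
  rw [finsum_eq_single _ (CQmk S 1) hz]
  show (1 : H)⁻¹ • (if (1 : H) ∈ S then (1 : H) • v else 0) = v
  rw [if_pos S.one_mem]
  simp

end AuxPres

section AuxUnitFn

variable (o : Type) [CommRing o]
variable {H : Type} [Group H] {V : Type} [AddCommGroup V] [Module o V]
variable [DistribMulAction H V] [SMulCommClass H o V]

/-- `v ↦ [1,v]` (as a bare function on `H`), as an `o`-linear map. -/
def unitFnLin (S : Subgroup H) : V →ₗ[o] (H → V) where
  toFun v := unitFn S v
  map_add' a b := by
    funext h
    by_cases hS : h ∈ S <;> simp [unitFn, hS, smul_add]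
  map_smul' c a := by
    funext h
    by_cases hS : h ∈ S
    · simp only [unitFn, if_pos hS, RingHom.id_apply, Pi.smul_apply]
      exact smul_comm h c a
    · simp [unitFn, hS]

lemma aux_unitFn_smul {S : Subgroup H} {s : H} (hs : s ∈ S) (v : V) :
    unitFn S (s • v) = indTrans s (unitFn S v) := by
  funext h
  by_cases hS : h ∈ S
  · have hmem : h * s ∈ S := S.mul_mem hS hs
    simp only [unitFn, indTrans, if_pos hS, if_pos hmem, mul_smul]
  · have hmem : h * s ∉ S := fun hc => hS (by simpa using S.mul_mem hc (S.inv_mem hs))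
    simp only [unitFn, indTrans, if_neg hS, if_neg hmem]

end AuxUnitFn

/-- If `ind_{B₀}^B (V₀) → V` is a finite presentation and `W₀` is a finitely
generated `o[B₀]`-submodule of the induction containing `[1, V₀]`, then the image `W₀'` of
`W₀` in `V` generates `V` and yields a finite presentation. -/
theorem statement7
    (o : Type) [CommRing o]
    (B : Type) [Group B] [TopologicalSpace B] (B0 : Subgroup B) (hB0 : IsOpen (B0 : Set B))
    (V : Type) [AddCommGroup V] [Module o V]
    [DistribMulAction B V] [SMulCommClass B o V]
    (hsm : IsSmoothRep o B V)
    (V0 : Submodule o V) (hst : IsStableSub o V (B0 : Set B) V0)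
    (hfg : IsFGOver o V (B0 : Set B) V0)
    (hgen : gspan o V (Set.univ : Set B) (V0 : Set V) = ⊤)
    (P : Ind o B0 V0 →ₗ[o] V) (hP : IsPresMap o hst P)
    (hker : IsFGOver o (↥(Ind o B0 V0)) (Set.univ : Set B) (LinearMap.ker P))
    (W0 : Submodule o ↥(Ind o B0 V0))
    (hW0st : IsStableSub o (↥(Ind o B0 V0)) (B0 : Set B) W0)
    (hW0fg : IsFGOver o (↥(Ind o B0 V0)) (B0 : Set B) W0)
    (hW0unit : ∀ v (hv : v ∈ V0), unitElt o hst hv ∈ W0) :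
    gspan o V (Set.univ : Set B) ((Submodule.map P W0 : Submodule o V) : Set V) = ⊤ ∧
    FinitelyPresentedVia o B0 (Submodule.map P W0) := by
  classical
  obtain ⟨hPe, hPu⟩ := hP
  set W0' : Submodule o V := Submodule.map P W0 with hW0'def
  -- `V₀ ⊆ W₀'`
  have hV0le : V0 ≤ W0' := fun v hv => ⟨unitElt o hst hv, hW0unit v hv, hPu v hv⟩
  -- `W₀'` is `B₀`-stable
  have hst' : IsStableSub o V (B0 : Set B) W0' := by
    intro s hs v hv
    obtain ⟨w, hw, rfl⟩ := Submodule.mem_map.mp hv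
    exact Submodule.mem_map.mpr ⟨s • w, hW0st s hs w hw, hPe s w⟩
  -- `W₀'` generates `V`
  have hgen' : gspan o V (Set.univ : Set B) (W0' : Set V) = ⊤ := by
    have hmono := aux_gspan_mono o (S := (Set.univ : Set B))
      (show (V0 : Set V) ⊆ (W0' : Set V) from hV0le)
    rw [hgen] at hmono
    exact top_unique hmono
  obtain ⟨X, hXsub, hXspan⟩ := hW0fg
  -- `W₀'` is f.g. over `o[B₀]`
  have hfg' : IsFGOver o V (B0 : Set B) W0' := by
    refine ⟨X.image P, ?_, ?_⟩
    · intro v hv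
      rw [Finset.coe_image] at hv
      obtain ⟨w, hw, rfl⟩ := hv
      exact Submodule.mem_map.mpr ⟨w, hXsub hw, rfl⟩
    · rw [hW0'def, hXspan, aux_map_gspan o P (fun s _ v => hPe s v), Finset.coe_image]
  -- the inclusion `ind(V₀) ⊆ ind(W₀')`
  have hIle : Ind o B0 V0 ≤ Ind o B0 W0' := by
    intro f hf
    obtain ⟨h1, h2, h3⟩ := (aux_mem_Ind_iff o).mp hf
    exact (aux_mem_Ind_iff o).mpr ⟨fun h => hV0le (h1 h), h2, h3⟩
  set ι : ↥(Ind o B0 V0) →ₗ[o] ↥(Ind o B0 W0') := Submodule.inclusion hIle with hιdef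
  have hιe : ∀ (g : B) (f : ↥(Ind o B0 V0)), ι (g • f) = g • ι f :=
    fun g f => Subtype.ext rfl
  -- the presentation map for `W₀'`
  set P' : ↥(Ind o B0 W0') →ₗ[o] V := presMap o with hP'def
  have hP'e : ∀ (g : B) (f : ↥(Ind o B0 W0')), P' (g • f) = g • P' f := presMap_equivar o
  have hP'u : ∀ v (hv : v ∈ W0'), P' (unitElt o hst' hv) = v := presMap_unit o hst'
  have hPι : ∀ f, P' (ι f) = P f := by
    refine aux_presmap_unique o hst (P'.comp ι) P ?_ hPe ?_
    · intro g f
      simp only [LinearMap.comp_apply, hιe, hP'e]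
    · intro v hv
      have hιu : ι (unitElt o hst hv) = unitElt o hst' (hV0le hv) := Subtype.ext rfl
      show P' (ι (unitElt o hst hv)) = P (unitElt o hst hv)
      rw [hιu, hP'u, hPu]
  -- the generating set of the new kernel
  obtain ⟨Y, hYsub, hYspan⟩ := hker
  set zelt : {x // x ∈ X} → ↥(Ind o B0 W0') := fun x =>
    unitElt o hst' (Submodule.mem_map.mpr ⟨x.1, hXsub (Finset.mem_coe.mpr x.2), rfl⟩)
      - ι x.1 with hzeltdef
  set Z : Finset ↥(Ind o B0 W0') := Y.image ι ∪ X.attach.image zelt with hZdef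
  set R : Submodule o ↥(Ind o B0 W0') :=
    LinearMap.range ι ⊔ gspan o (↥(Ind o B0 W0')) (Set.univ : Set B) (Z : Set _) with hRdef
  have hRstab : ∀ (g : B), ∀ r ∈ R, g • r ∈ R := by
    intro g r hr
    obtain ⟨a, ha, b, hb, rfl⟩ := Submodule.mem_sup.mp hr
    rw [smul_add]
    refine Submodule.add_mem _ (Submodule.mem_sup_left ?_)
      (Submodule.mem_sup_right (aux_smul_mem_gspan_univ o g hb))
    obtain ⟨a0, rfl⟩ := ha
    exact ⟨g • a0, hιe g a0⟩
  have hzeltR : ∀ x : {x // x ∈ X}, zelt x ∈ R := by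
    intro x
    refine Submodule.mem_sup_right (Submodule.subset_span ⟨1, trivial, zelt x, ?_,
      (one_smul B _).symm⟩)
    exact Finset.mem_coe.mpr (Finset.mem_union_right _
      (Finset.mem_image.mpr ⟨x, Finset.mem_attach _ _, rfl⟩))
  -- the "defect" map `D w = [1, P w] - w` and the submodule where it lands in `R`
  set D : ↥(Ind o B0 V0) →ₗ[o] (B → V) :=
    (unitFnLin o B0).comp P - (Ind o B0 V0).subtype with hDdef
  have hDval : ∀ w : ↥(Ind o B0 V0), D w = unitFn B0 (P w) - (w : B → V) := fun w => rfl
  have hDsmul : ∀ s ∈ B0, ∀ w : ↥(Ind o B0 V0), D (s • w) = indTrans s (D w) := by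
    intro s hs w
    have h1 : D (s • w) = unitFn B0 (s • P w) - indTrans s (w : B → V) := by
      rw [hDval, hPe]; rfl
    rw [h1, aux_unitFn_smul hs, hDval]
    funext h
    simp [indTrans]
  set T : Submodule o ↥(Ind o B0 V0) :=
    Submodule.comap D (Submodule.map (Ind o B0 W0').subtype R) with hTdef
  have hXT : ∀ x : {x // x ∈ X}, (x : ↥(Ind o B0 V0)) ∈ T := by
    intro x
    show D x.1 ∈ Submodule.map (Ind o B0 W0').subtype R
    refine Submodule.mem_map.mpr ⟨zelt x, hzeltR x, ?_⟩
    show ((zelt x : ↥(Ind o B0 W0')) : B → V) = D x.1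
    rw [hzeltdef, hDval]
    simp only [AddSubgroupClass.coe_sub]
    congr 1
  have hW0T : W0 ≤ T := by
    rw [hXspan]
    refine Submodule.span_le.mpr ?_
    rintro w ⟨s, hs, x, hx, rfl⟩
    show D (s • x) ∈ Submodule.map (Ind o B0 W0').subtype R
    obtain ⟨r, hrR, hre⟩ := Submodule.mem_map.mp (hXT ⟨x, Finset.mem_coe.mp hx⟩)
    refine Submodule.mem_map.mpr ⟨s • r, hRstab s r hrR, ?_⟩
    rw [hDsmul s hs x, ← hre]
    rfl
  -- every unit element of `ind(W₀')` lies in `R`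
  have hunitR : ∀ w ∈ W0, ∀ hv' : P w ∈ W0', unitElt o hst' hv' ∈ R := by
    intro w hw hv'
    obtain ⟨r, hrR, hre⟩ := Submodule.mem_map.mp (hW0T hw)
    have heq : unitElt o hst' hv' = r + ι w := by
      apply Subtype.ext
      show unitFn B0 (P w) = ((r + ι w : ↥(Ind o B0 W0')) : B → V)
      have hre' : (r : B → V) = unitFn B0 (P w) - (w : B → V) := by
        rw [← hDval]; exact hre
      rw [Submodule.coe_add, hre', Submodule.coe_inclusion]
      abel
    rw [heq]
    exact R.add_mem hrR (Submodule.mem_sup_left ⟨w, rfl⟩)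
  have hallR : ∀ f : ↥(Ind o B0 W0'), f ∈ R := by
    have hspanle : gspan o (↥(Ind o B0 W0')) (Set.univ : Set B) (unitSet o hst') ≤ R := by
      refine Submodule.span_le.mpr ?_
      rintro u ⟨s, -, u0, ⟨v, hv, rfl⟩, rfl⟩
      refine hRstab s _ ?_
      have hv2 := hv
      obtain ⟨w, hw, heq⟩ := Submodule.mem_map.mp hv2
      subst heq
      exact hunitR w hw hv
    exact fun f => hspanle (aux_decomp o hst' f)
  -- `Z` is contained in the kernel of `P'`
  have hZker : ∀ z ∈ Z, P' z = 0 := by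
    intro z hz
    rcases Finset.mem_union.mp hz with hz1 | hz2
    · obtain ⟨y, hy, rfl⟩ := Finset.mem_image.mp hz1
      rw [hPι]
      exact LinearMap.mem_ker.mp (hYsub (Finset.mem_coe.mpr hy))
    · obtain ⟨x, -, rfl⟩ := Finset.mem_image.mp hz2
      rw [hzeltdef]
      rw [map_sub, hP'u, hPι, sub_self]
  have hgspanker : gspan o (↥(Ind o B0 W0')) (Set.univ : Set B) (Z : Set _) ≤
      LinearMap.ker P' := by
    refine Submodule.span_le.mpr ?_
    rintro u ⟨s, -, z, hz, rfl⟩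
    rw [SetLike.mem_coe, LinearMap.mem_ker, hP'e, hZker z (Finset.mem_coe.mp hz), smul_zero]
  have hZsub : (Z : Set ↥(Ind o B0 W0')) ⊆ (LinearMap.ker P' : Set _) := fun z hz =>
    LinearMap.mem_ker.mpr (hZker z (Finset.mem_coe.mp hz))
  -- the kernel of `P'` equals the span of `Z`
  have hkerEq : LinearMap.ker P' = gspan o (↥(Ind o B0 W0')) (Set.univ : Set B) (Z : Set _) := by
    refine le_antisymm ?_ hgspanker
    intro f hf
    obtain ⟨a, ha, b, hb, rfl⟩ := Submodule.mem_sup.mp (hallR f)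
    obtain ⟨a0, rfl⟩ := ha
    have hb0 : P' b = 0 := LinearMap.mem_ker.mp (hgspanker hb)
    have ha0 : a0 ∈ LinearMap.ker P := by
      have h0 : P' (ι a0 + b) = 0 := LinearMap.mem_ker.mp hf
      rw [map_add, hb0, add_zero, hPι] at h0
      exact LinearMap.mem_ker.mpr h0
    rw [hYspan] at ha0
    have hmapY := aux_map_gspan o (S := (Set.univ : Set B)) ι (fun s _ f => hιe s f) (Y : Set _)
    have hιa0 : ι a0 ∈ gspan o (↥(Ind o B0 W0')) (Set.univ : Set B) (ι '' (Y : Set _)) := by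
      rw [← hmapY]
      exact Submodule.mem_map.mpr ⟨a0, ha0, rfl⟩
    have hsubZ : ι '' (Y : Set _) ⊆ (Z : Set ↥(Ind o B0 W0')) := by
      rintro _ ⟨y, hy, rfl⟩
      exact Finset.mem_coe.mpr (Finset.mem_union_left _
        (Finset.mem_image.mpr ⟨y, Finset.mem_coe.mp hy, rfl⟩))
    exact Submodule.add_mem _ (aux_gspan_mono o hsubZ hιa0) hb
  exact ⟨hgen', hst', hfg', hgen', P', ⟨hP'e, hP'u⟩, ⟨Z, hZsub, hkerEq⟩⟩
end
end

section
/- Let o be a commutative ring, B a topological group, B_0 an open subgroup of B such that the category of smooth o-representations of B_0 is noetherian (every o[B_0]-submodule of a finite type smooth representation of B_0 is of finite type). Let 0 -> V' -> V -> V'' -> 0 be an exact sequence of smooth representations of B over o with V' of finite type over o[B] and V of finite presentation relative to B_0. Then V'' is of finite presentation relative to B_0. -/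
noncomputable section
attribute [local instance] Classical.propDecidable
open Pointwise


/-! ### Auxiliary lemmas -/

section MyAux

variable (o : Type) [CommRing o]

lemma myGspan_le {H V : Type} [AddCommGroup V] [Module o V] [SMul H V]
    {S : Set H} {T : Set V} {N : Submodule o V} (hT : T ⊆ (N : Set V))
    (hN : IsStableSub o V S N) : gspan o V S T ≤ N := by
  apply Submodule.span_le.2
  rintro v ⟨s, hs, w, hw, rfl⟩
  exact hN s hs w (hT hw)

lemma myGspan_mono {H V : Type} [AddCommGroup V] [Module o V] [SMul H V]
    {S : Set H} {T T' : Set V} (h : T ⊆ T') :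
    gspan o V S T ≤ gspan o V S T' :=
  Submodule.span_mono (by rintro v ⟨s, hs, w, hw, rfl⟩; exact ⟨s, hs, w, h hw, rfl⟩)

lemma myGspan_map {H V W : Type} [AddCommGroup V] [Module o V] [SMul H V]
    [AddCommGroup W] [Module o W] [SMul H W]
    (φ : V →ₗ[o] W) {S : Set H} (hφ : ∀ s ∈ S, ∀ v : V, φ (s • v) = s • φ v) (T : Set V) :
    Submodule.map φ (gspan o V S T) = gspan o W S (φ '' T) := by
  rw [gspan, gspan, Submodule.map_span]
  congr 1
  ext w
  constructor
  · rintro ⟨v, ⟨s, hs, t, ht, rfl⟩, rfl⟩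
    exact ⟨s, hs, φ t, ⟨t, ht, rfl⟩, hφ s hs t⟩
  · rintro ⟨s, hs, _, ⟨t, ht, rfl⟩, rfl⟩
    exact ⟨s • t, ⟨s, hs, t, ht, rfl⟩, hφ s hs t⟩

end MyAux

section MyVanish

variable (o : Type) [CommRing o]

lemma myPresMap_comp_vanish {H : Type} [Group H] {V V'' : Type}
    [AddCommGroup V] [Module o V] [DistribMulAction H V] [SMulCommClass H o V]
    [AddCommGroup V''] [Module o V''] [DistribMulAction H V''] [SMulCommClass H o V'']
    {S : Subgroup H} {V0 : Submodule o V} (hst : IsStableSub o V (S : Set H) V0)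
    (P : Ind o S V0 →ₗ[o] V) (hP : IsPresMap o hst P)
    (φ : V →ₗ[o] V'') (hφ : ∀ (g : H) (v : V), φ (g • v) = g • φ v)
    (f : Ind o S V0) (hf : ∀ h, φ ((f : H → V) h) = 0) : φ (P f) = 0 := by
  obtain ⟨-, -, X, hX⟩ := f.2
  have main : ∀ (n : ℕ) (X : Finset H) (f : Ind o S V0),
      X.card ≤ n →
      (∀ h, (f : H → V) h ≠ 0 → ∃ s ∈ S, ∃ x ∈ X, h = s * x) →
      (∀ h, φ ((f : H → V) h) = 0) → φ (P f) = 0 := by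
    intro n
    induction n with
    | zero =>
      intro X f hcard hsupp _
      have hX0 : X = ∅ := Finset.card_eq_zero.mp (Nat.le_zero.mp hcard)
      have hf0 : ∀ h, (f : H → V) h = 0 := by
        intro h
        by_contra hne
        obtain ⟨s, hs, x, hx, -⟩ := hsupp h hne
        simp [hX0] at hx
      have : f = 0 := Subtype.ext (funext hf0)
      rw [this, map_zero, map_zero]
    | succ n ih =>
      intro X f hcard hsupp hvals
      by_cases hX0 : X = ∅
      · have hf0 : ∀ h, (f : H → V) h = 0 := by
          intro h
          by_contra hne
          obtain ⟨s, hs, x, hx, -⟩ := hsupp h hne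
          simp [hX0] at hx
        have : f = 0 := Subtype.ext (funext hf0)
        rw [this, map_zero, map_zero]
      · obtain ⟨x, hx⟩ := Finset.nonempty_iff_ne_empty.mpr hX0
        set v : V := (f : H → V) x with hv
        have hvV0 : v ∈ V0 := f.2.1 x
        set u : Ind o S V0 := x⁻¹ • (unitElt o hst hvV0) with hu
        have hu_apply : ∀ h, (u : H → V) h = if h * x⁻¹ ∈ S then (h * x⁻¹) • v else 0 :=
          fun h => rfl
        set g : Ind o S V0 := f - u with hg
        have hg_apply : ∀ h, (g : H → V) h = (f : H → V) h - (u : H → V) h := fun h => rfl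
        have hgsupp : ∀ h, (g : H → V) h ≠ 0 → ∃ s ∈ S, ∃ x' ∈ X.erase x, h = s * x' := by
          intro h hne
          by_cases hmem : h * x⁻¹ ∈ S
          · exfalso
            have heq : (f : H → V) h = (h * x⁻¹) • v := by
              have h2 := f.2.2.1 (h * x⁻¹) hmem x
              rwa [mul_assoc, inv_mul_cancel, mul_one] at h2
            exact hne (by rw [hg_apply, hu_apply, if_pos hmem, heq, sub_self])
          · have hfne : (f : H → V) h ≠ 0 := by
              rw [hg_apply, hu_apply, if_neg hmem, sub_zero] at hne
              exact hne
            obtain ⟨s, hs, x', hx', rfl⟩ := hsupp h hfne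
            refine ⟨s, hs, x', Finset.mem_erase.mpr ⟨?_, hx'⟩, rfl⟩
            rintro rfl
            exact hmem (by rw [mul_inv_cancel_right]; exact hs)
        have hgvals : ∀ h, φ ((g : H → V) h) = 0 := by
          intro h
          rw [hg_apply, map_sub, hvals h, hu_apply]
          by_cases hmem : h * x⁻¹ ∈ S
          · rw [if_pos hmem, hφ, hvals x, smul_zero, sub_self]
          · rw [if_neg hmem, map_zero, sub_self]
        have hPg : φ (P g) = 0 := by
          apply ih (X.erase x) g ?_ hgsupp hgvals
          have := Finset.card_erase_of_mem hx
          omega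
        have hPu : φ (P u) = 0 := by
          rw [hu, hP.1, hP.2 v hvV0, hφ, hvals x, smul_zero]
        have hfgu : f = g + u := by rw [hg, sub_add_cancel]
        rw [hfgu, map_add, map_add, hPg, hPu, add_zero]
  exact main X.card X f le_rfl hX hf

end MyVanish

section MyLift

variable (o : Type) [CommRing o]

lemma myInd_lift {H : Type} [Group H] {V V'' : Type}
    [AddCommGroup V] [Module o V] [DistribMulAction H V] [SMulCommClass H o V]
    [AddCommGroup V''] [Module o V''] [DistribMulAction H V''] [SMulCommClass H o V'']
    {S : Subgroup H} {V0 : Submodule o V} (hst : IsStableSub o V (S : Set H) V0)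
    (π : V →ₗ[o] V'') (hπeq : ∀ (g : H) (v : V), π (g • v) = g • π v)
    (f'' : Ind o S (V0.map π)) :
    ∃ f : Ind o S V0, ∀ h, π ((f : H → V) h) = (f'' : H → V'') h := by
  obtain ⟨hmem'', hequiv'', X, hX⟩ := f''.2
  let r : Setoid H :=
    ⟨fun x y => x * y⁻¹ ∈ S,
     ⟨fun x => by rw [mul_inv_cancel]; exact S.one_mem,
      fun {x y} h => by
        have := S.inv_mem h
        rwa [mul_inv_rev, inv_inv] at this,
      fun {x y z} h1 h2 => by
        have := S.mul_mem h1 h2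
        rwa [mul_assoc, ← mul_assoc y⁻¹ y z⁻¹, inv_mul_cancel, one_mul] at this⟩⟩
  let rep : H → H := fun h => (Quotient.mk r h).out
  have hrep1 : ∀ h, h * (rep h)⁻¹ ∈ S := by
    intro h
    have h1 : Quotient.mk r (rep h) = Quotient.mk r h := Quotient.out_eq _
    have h2 : rep h * h⁻¹ ∈ S := Quotient.exact h1
    have := S.inv_mem h2
    rwa [mul_inv_rev, inv_inv] at this
  have hrep2 : ∀ s ∈ S, ∀ h, rep (s * h) = rep h := by
    intro s hs h
    have : Quotient.mk r (s * h) = Quotient.mk r h := by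
      apply Quotient.sound
      show s * h * h⁻¹ ∈ S
      rwa [mul_inv_cancel_right]
    show (Quotient.mk r (s * h)).out = (Quotient.mk r h).out
    rw [this]
  let vfun : H → V := fun h =>
    if hz : (f'' : H → V'') h = 0 then 0 else (Submodule.mem_map.mp (hmem'' h)).choose
  have hv1 : ∀ h, vfun h ∈ V0 := by
    intro h
    by_cases hz : (f'' : H → V'') h = 0
    · simp only [vfun, dif_pos hz]; exact V0.zero_mem
    · simp only [vfun, dif_neg hz]; exact (Submodule.mem_map.mp (hmem'' h)).choose_spec.1
  have hv2 : ∀ h, π (vfun h) = (f'' : H → V'') h := by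
    intro h
    by_cases hz : (f'' : H → V'') h = 0
    · simp only [vfun, dif_pos hz, map_zero, hz]
    · simp only [vfun, dif_neg hz]; exact (Submodule.mem_map.mp (hmem'' h)).choose_spec.2
  have hv3 : ∀ h, vfun h ≠ 0 → (f'' : H → V'') h ≠ 0 := by
    intro h hne hz
    exact hne (by simp only [vfun, dif_pos hz])
  let fFun : H → V := fun h => (h * (rep h)⁻¹) • vfun (rep h)
  have hfmem : fFun ∈ Ind o S V0 := by
    refine ⟨fun h => hst _ (hrep1 h) _ (hv1 _), fun s hs h => ?_, X, fun h hne => ?_⟩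
    · show (s * h * (rep (s * h))⁻¹) • vfun (rep (s * h)) = s • ((h * (rep h)⁻¹) • vfun (rep h))
      rw [hrep2 s hs h, ← mul_smul, mul_assoc]
    · have hvne : vfun (rep h) ≠ 0 := by
        intro h0
        exact hne (by show (h * (rep h)⁻¹) • vfun (rep h) = 0; rw [h0, smul_zero])
      obtain ⟨s, hs, x, hxX, hrx⟩ := hX (rep h) (hv3 _ hvne)
      refine ⟨h * (rep h)⁻¹ * s, S.mul_mem (hrep1 h) hs, x, hxX, ?_⟩
      rw [mul_assoc, ← hrx, mul_assoc, inv_mul_cancel, mul_one]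
  refine ⟨⟨fFun, hfmem⟩, fun h => ?_⟩
  show π ((h * (rep h)⁻¹) • vfun (rep h)) = (f'' : H → V'') h
  rw [hπeq, hv2]
  rw [← hequiv'' (h * (rep h)⁻¹) (hrep1 h) (rep h), mul_assoc, inv_mul_cancel, mul_one]

end MyLift
/-- If the category of smooth `o`-representations of `B₀` is noetherian,
and `0 → V' → V → V'' → 0` is exact with `V'` of finite type and `V` of finite presentation
relative to `B₀`, then `V''` is of finite presentation relative to `B₀`. -/
theorem statement9
    (o : Type) [CommRing o]
    (B : Type) [Group B] [TopologicalSpace B] (B0 : Subgroup B) (hB0 : IsOpen (B0 : Set B))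
    (hnoeth : ∀ (W : Type) [AddCommGroup W] [Module o W] [DistribMulAction (↥B0) W]
      [SMulCommClass (↥B0) o W], IsSmoothRep o (↥B0) W →
      (∃ X : Finset W, gspan o W (Set.univ : Set ↥B0) (X : Set W) = ⊤) →
      ∀ N : Submodule o W, IsStableSub o W (Set.univ : Set ↥B0) N →
        IsFGOver o W (Set.univ : Set ↥B0) N)
    (V' : Type) [AddCommGroup V'] [Module o V']
    [DistribMulAction B V'] [SMulCommClass B o V']
    (hsm' : IsSmoothRep o B V')
    (V : Type) [AddCommGroup V] [Module o V]
    [DistribMulAction B V] [SMulCommClass B o V]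
    (hsm : IsSmoothRep o B V)
    (V'' : Type) [AddCommGroup V''] [Module o V'']
    [DistribMulAction B V''] [SMulCommClass B o V'']
    (hsm'' : IsSmoothRep o B V'')
    (ι : V' →ₗ[o] V) (hιinj : Function.Injective ⇑ι)
    (hιeq : ∀ (b : B) (v : V'), ι (b • v) = b • ι v)
    (π : V →ₗ[o] V'') (hπsurj : Function.Surjective ⇑π)
    (hπeq : ∀ (b : B) (v : V), π (b • v) = b • π v)
    (hexact : LinearMap.range ι = LinearMap.ker π)
    (hV'ft : ∃ X : Finset V', gspan o V' (Set.univ : Set B) (X : Set V') = ⊤)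
    (hV : HasFinitePres o V B0) :
    HasFinitePres o V'' B0 := by
  classical
  obtain ⟨V0, hst, hfg, htop, P, hP, hker⟩ := hV
  set V0'' : Submodule o V'' := V0.map π with hV0''def
  have hst'' : IsStableSub o V'' (B0 : Set B) V0'' := by
    rintro s hs v hv
    obtain ⟨w, hw, rfl⟩ := Submodule.mem_map.mp hv
    exact Submodule.mem_map.mpr ⟨s • w, hst s hs w hw, hπeq s w⟩
  -- the induced map on inductions
  have hΦmem : ∀ f : Ind o B0 V0, (fun h => π ((f : B → V) h)) ∈ Ind o B0 V0'' := by
    intro f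
    obtain ⟨h1, h2, X, hX⟩ := f.2
    refine ⟨fun h => Submodule.mem_map.mpr ⟨_, h1 h, rfl⟩, fun s hs h => ?_, X, fun h hne => ?_⟩
    · show π ((f : B → V) (s * h)) = s • π ((f : B → V) h)
      rw [h2 s hs h, hπeq]
    · exact hX h fun h0 => hne (by show π ((f : B → V) h) = 0; rw [h0, map_zero])
  let Φ : Ind o B0 V0 →ₗ[o] Ind o B0 V0'' :=
    { toFun := fun f => ⟨fun h => π ((f : B → V) h), hΦmem f⟩
      map_add' := fun f g => Subtype.ext (funext fun h => map_add π _ _)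
      map_smul' := fun c f => Subtype.ext (funext fun h => map_smul π c _) }
  have hΦequiv : ∀ (g : B) (f : Ind o B0 V0), Φ (g • f) = g • Φ f :=
    fun g f => Subtype.ext (funext fun h => rfl)
  have hΦsurj : ∀ f'' : Ind o B0 V0'', ∃ f, Φ f = f'' := by
    intro f''
    obtain ⟨f, hf⟩ := myInd_lift o hst π hπeq f''
    exact ⟨f, Subtype.ext (funext hf)⟩
  let σ : Ind o B0 V0'' → Ind o B0 V0 := fun f'' => (hΦsurj f'').choose
  have hσ : ∀ f'', Φ (σ f'') = f'' := fun f'' => (hΦsurj f'').choose_spec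
  have hker0 : ∀ u : Ind o B0 V0, Φ u = 0 → π (P u) = 0 := by
    intro u hu
    apply myPresMap_comp_vanish o hst P hP π hπeq u
    intro h
    exact congrFun (congrArg Subtype.val hu) h
  have hwd : ∀ u1 u2 : Ind o B0 V0, Φ u1 = Φ u2 → π (P u1) = π (P u2) := by
    intro u1 u2 h12
    have h0 : Φ (u1 - u2) = 0 := by rw [map_sub, h12, sub_self]
    have h1 := hker0 _ h0
    rw [map_sub, map_sub, sub_eq_zero] at h1
    exact h1
  let P'' : Ind o B0 V0'' →ₗ[o] V'' :=
    { toFun := fun f'' => π (P (σ f''))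
      map_add' := fun a b => by
        have h1 : Φ (σ (a + b)) = Φ (σ a + σ b) := by rw [map_add, hσ, hσ, hσ]
        show π (P (σ (a + b))) = π (P (σ a)) + π (P (σ b))
        rw [hwd _ _ h1, map_add, map_add]
      map_smul' := fun c a => by
        have h1 : Φ (σ (c • a)) = Φ (c • σ a) := by rw [map_smul, hσ, hσ]
        show π (P (σ (c • a))) = (RingHom.id o) c • π (P (σ a))
        simp only [RingHom.id_apply]
        rw [hwd _ _ h1, map_smul, map_smul] }
  have hP''apply : ∀ f'', P'' f'' = π (P (σ f'')) := fun _ => rfl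
  have hP''equiv : ∀ (g : B) (f'' : Ind o B0 V0''), P'' (g • f'') = g • P'' f'' := by
    intro g f''
    have h1 : Φ (σ (g • f'')) = Φ (g • σ f'') := by rw [hΦequiv, hσ, hσ]
    rw [hP''apply, hP''apply, hwd _ _ h1, hP.1, hπeq]
  have hP''unit : ∀ v'' (hv'' : v'' ∈ V0''), P'' (unitElt o hst'' hv'') = v'' := by
    intro v'' hv''
    obtain ⟨w, hw, hwv⟩ := Submodule.mem_map.mp hv''
    have h1 : Φ (unitElt o hst hw) = unitElt o hst'' hv'' := by
      apply Subtype.ext; funext h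
      show π (unitFn B0 w h) = unitFn B0 v'' h
      by_cases hh : h ∈ B0
      · simp only [unitFn, if_pos hh, hπeq, hwv]
      · simp only [unitFn, if_neg hh, map_zero]
    have h2 : Φ (σ (unitElt o hst'' hv'')) = Φ (unitElt o hst hw) := by rw [hσ, h1]
    rw [hP''apply, hwd _ _ h2, hP.2 w hw, hwv]
  -- surjectivity of P
  have hPrange : LinearMap.range P = ⊤ := by
    rw [← top_le_iff, ← htop]
    apply myGspan_le o
    · intro v hv
      exact LinearMap.mem_range.mpr ⟨unitElt o hst hv, hP.2 v hv⟩
    · rintro s - w hw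
      obtain ⟨u, rfl⟩ := LinearMap.mem_range.mp hw
      exact LinearMap.mem_range.mpr ⟨s • u, hP.1 s u⟩
  have hPsurj : ∀ v : V, ∃ u, P u = v := fun v =>
    LinearMap.mem_range.mp (by rw [hPrange]; exact Submodule.mem_top)
  -- the kernel of π ∘ P
  set K : Submodule o (Ind o B0 V0) := LinearMap.ker (π.comp P) with hKdef
  obtain ⟨Y, hYsub, hYspan⟩ := hker
  obtain ⟨X', hX'⟩ := hV'ft
  let yfun : V' → Ind o B0 V0 := fun x => (hPsurj (ι x)).choose
  have hy : ∀ x, P (yfun x) = ι x := fun x => (hPsurj (ι x)).choose_spec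
  set Z : Finset (Ind o B0 V0) := X'.image yfun with hZdef
  have hYZsub : ((Y ∪ Z : Finset _) : Set (Ind o B0 V0)) ⊆ (K : Set _) := by
    intro u hu
    rw [Finset.coe_union] at hu
    rw [SetLike.mem_coe, hKdef, LinearMap.mem_ker, LinearMap.comp_apply]
    rcases hu with hu | hu
    · have h0 : u ∈ LinearMap.ker P := hYsub hu
      rw [LinearMap.mem_ker] at h0
      rw [h0, map_zero]
    · rw [Finset.mem_coe, hZdef, Finset.mem_image] at hu
      obtain ⟨x, hx, rfl⟩ := hu
      have : ι x ∈ LinearMap.ker π := by rw [← hexact]; exact LinearMap.mem_range.mpr ⟨x, rfl⟩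
      rw [hy x]
      exact LinearMap.mem_ker.mp this
  have hKstable : IsStableSub o (Ind o B0 V0) (Set.univ : Set B) K := by
    rintro s - u hu
    rw [hKdef, LinearMap.mem_ker, LinearMap.comp_apply] at hu ⊢
    rw [hP.1, hπeq, hu, smul_zero]
  have hKeq : K = gspan o (Ind o B0 V0) (Set.univ : Set B) ((Y ∪ Z : Finset _) : Set _) := by
    apply le_antisymm
    · intro u hu
      rw [hKdef, LinearMap.mem_ker, LinearMap.comp_apply] at hu
      have hPu : P u ∈ LinearMap.range ι := by rw [hexact, LinearMap.mem_ker]; exact hu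
      obtain ⟨v', hv'⟩ := LinearMap.mem_range.mp hPu
      have hv'mem : v' ∈ gspan o V' (Set.univ : Set B) (X' : Set V') := by
        rw [hX']; exact Submodule.mem_top
      have h1 : P u ∈ Submodule.map ι (gspan o V' (Set.univ : Set B) (X' : Set V')) :=
        Submodule.mem_map.mpr ⟨v', hv'mem, hv'⟩
      rw [myGspan_map o ι (fun s _ v => hιeq s v)] at h1
      have himg : ⇑ι '' (X' : Set V') = ⇑P '' (Z : Set (Ind o B0 V0)) := by
        rw [hZdef, Finset.coe_image, Set.image_image]
        exact Set.image_congr fun x _ => (hy x).symm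
      rw [himg, ← myGspan_map o P (fun s _ f => hP.1 s f)] at h1
      obtain ⟨w, hw, hwP⟩ := Submodule.mem_map.mp h1
      have huw : u - w ∈ gspan o (Ind o B0 V0) (Set.univ : Set B) (Y : Set (Ind o B0 V0)) := by
        rw [← hYspan, LinearMap.mem_ker, map_sub, hwP, sub_self]
      have hfin : u = (u - w) + w := (sub_add_cancel u w).symm
      rw [hfin]
      refine Submodule.add_mem _ (myGspan_mono o ?_ huw) (myGspan_mono o ?_ hw)
      · rw [Finset.coe_union]; exact Set.subset_union_left
      · rw [Finset.coe_union]; exact Set.subset_union_right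
    · exact myGspan_le o hYZsub hKstable
  have hkerP'' : LinearMap.ker P'' = Submodule.map Φ K := by
    ext f''
    rw [LinearMap.mem_ker, Submodule.mem_map]
    constructor
    · intro h0
      refine ⟨σ f'', ?_, hσ f''⟩
      rw [hKdef, LinearMap.mem_ker, LinearMap.comp_apply]
      rw [hP''apply] at h0
      exact h0
    · rintro ⟨u, hu, rfl⟩
      rw [hKdef, LinearMap.mem_ker, LinearMap.comp_apply] at hu
      rw [hP''apply, hwd _ u (hσ _)]
      exact hu
  refine ⟨V0'', hst'', ?_, ?_, P'', ⟨hP''equiv, hP''unit⟩, ?_⟩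
  · -- V0'' is f.g. over o[B0]
    obtain ⟨X0, hX0sub, hX0span⟩ := hfg
    refine ⟨X0.image π, ?_, ?_⟩
    · rw [Finset.coe_image]
      rintro _ ⟨w, hw, rfl⟩
      exact Submodule.mem_map.mpr ⟨w, hX0sub hw, rfl⟩
    · rw [hV0''def, hX0span, myGspan_map o π (fun s _ v => hπeq s v), Finset.coe_image]
  · -- V0'' generates V'' over o[B]
    have h1 : Submodule.map π (gspan o V (Set.univ : Set B) (V0 : Set V)) = ⊤ := by
      rw [htop, Submodule.map_top, LinearMap.range_eq_top]
      exact hπsurj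
    rw [myGspan_map o π (fun s _ v => hπeq s v)] at h1
    rw [hV0''def, Submodule.map_coe]
    exact h1
  · -- the kernel of P'' is f.g. over o[B]
    refine ⟨(Y ∪ Z).image (fun u => Φ u), ?_, ?_⟩
    · rw [Finset.coe_image]
      rintro _ ⟨u, hu, rfl⟩
      have hK : u ∈ K := hYZsub hu
      have hmem : Φ u ∈ Submodule.map Φ K := Submodule.mem_map.mpr ⟨u, hK, rfl⟩
      rw [← hkerP''] at hmem
      exact hmem
    · rw [hkerP'', hKeq, myGspan_map o Φ (fun s _ f => hΦequiv s f), Finset.coe_image]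
end
end

section
/- Let o be a discrete valuation ring with uniformizer p_o, B a topological group, and V a smooth representation of B over o such that p_o^n V = 0 for some natural number n. Then the subrepresentation V^{p_o = 0} := {v in V : p_o v = 0} is admissible if and only if V is admissible. -/
noncomputable section
attribute [local instance] Classical.propDecidable
open Pointwise


/-- Over a Noetherian ring, a submodule contained in an FG submodule is FG. -/
lemma aux_fg_of_le {o V : Type} [CommRing o] [IsNoetherianRing o] [AddCommGroup V] [Module o V]
    {N P : Submodule o V} (hN : N.FG) (h : P ≤ N) : P.FG := by
  haveI := isNoetherian_of_fg_of_noetherian N hN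
  have := Submodule.FG.map (IsNoetherian.noetherian (P.comap N.subtype)) (f := N.subtype)
  rwa [Submodule.map_comap_subtype, inf_eq_right.mpr h] at this

/-- If `P ⊓ V[p]` is FG then so is `P ⊓ V[p^k]`, over a Noetherian ring. -/
lemma aux_key {o V : Type} [CommRing o] [IsNoetherianRing o] [AddCommGroup V] [Module o V]
    (p : o) (P : Submodule o V) (hT : (P ⊓ Submodule.torsionBy o V p).FG) :
    ∀ k : ℕ, (P ⊓ Submodule.torsionBy o V (p ^ k)).FG
  | 0 => by
      have : P ⊓ Submodule.torsionBy o V (p ^ 0) = ⊥ := by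
        apply le_bot_iff.mp
        rintro v ⟨-, hv⟩
        simpa [Submodule.mem_torsionBy_iff] using hv
      rw [this]; exact Submodule.fg_bot
  | (k + 1) => by
      set f : V →ₗ[o] V := LinearMap.lsmul o V (p ^ k) with hf
      apply Submodule.fg_of_fg_map_of_fg_inf_ker f
      · refine aux_fg_of_le hT ?_
        rintro v ⟨w, ⟨hw1, hw2⟩, rfl⟩
        simp only [SetLike.mem_coe] at hw1 hw2
        refine ⟨Submodule.smul_mem _ _ hw1, ?_⟩
        simp only [SetLike.mem_coe, Submodule.mem_torsionBy_iff] at hw2 ⊢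
        simp only [hf, LinearMap.lsmul_apply, ← smul_assoc, smul_eq_mul, ← pow_succ']
        exact hw2
      · have heq : P ⊓ Submodule.torsionBy o V (p ^ (k+1)) ⊓ LinearMap.ker f
            = P ⊓ Submodule.torsionBy o V (p ^ k) := by
          ext v
          simp only [Submodule.mem_inf, LinearMap.mem_ker, Submodule.mem_torsionBy_iff, hf,
            LinearMap.lsmul_apply]
          constructor
          · rintro ⟨⟨h1, -⟩, h3⟩; exact ⟨h1, h3⟩
          · rintro ⟨h1, h2⟩
            refine ⟨⟨h1, ?_⟩, h2⟩
            rw [pow_succ, mul_smul, smul_comm, h2, smul_zero]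
        rw [heq]; exact aux_key p P hT k

/-- For `o` a discrete valuation ring with uniformizer `p₀` and `V` a
smooth representation killed by `p₀ⁿ`, the subrepresentation `V^{p₀ = 0}` is admissible
iff `V` is admissible. -/
theorem statement10
    (o : Type) [CommRing o] [IsDomain o] [IsDiscreteValuationRing o]
    (po : o) (hpo : Irreducible po)
    (B : Type) [Group B] [TopologicalSpace B]
    (V : Type) [AddCommGroup V] [Module o V] [DistribMulAction B V] [SMulCommClass B o V]
    (hsm : IsSmoothRep o B V)
    (n : ℕ) (hkill : ∀ v : V, po ^ n • v = 0) :
    (∀ H' : Subgroup B, IsCompact (H' : Set B) → IsOpen (H' : Set B) →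
      (invariantsSub o B V (H' : Set B) ⊓ Submodule.torsionBy o V po).FG) ↔
    IsAdmissibleRep o B V := by
  haveI : IsNoetherianRing o := PrincipalIdealRing.isNoetherianRing
  constructor
  · intro h
    intro H' hc ho
    have hk := aux_key po (invariantsSub o B V (H' : Set B)) (h H' hc ho) n
    have heq : invariantsSub o B V (H' : Set B) ⊓ Submodule.torsionBy o V (po ^ n)
        = invariantsSub o B V (H' : Set B) :=
      inf_eq_left.mpr (fun v _ => (Submodule.mem_torsionBy_iff _ _).mpr (hkill v))
    rwa [heq] at hk
  · intro h H' hc ho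
    exact aux_fg_of_le (h H' hc ho) inf_le_left
end
end

section
/- Let o be a noetherian commutative ring and F a nonarchimedean local field. Let B_0 Z be the subgroup of GL(2,F) generated by B_0 (upper triangular matrices with entries in O_F and unit diagonal entries) and the center Z. Then the category of smooth o-representations of B_0 Z is noetherian: every o[B_0 Z]-submodule of a smooth representation of B_0 Z over o that is finitely generated over o[B_0 Z] is itself finitely generated over o[B_0 Z]. -/
noncomputable section
attribute [local instance] Classical.propDecidable
open Pointwise


/-! ### The group `GL(2,F)` over a nonarchimedean local field `F` -/

open Matrix

/-- Bundle of data making the field `F` a nonarchimedean local field: the valuation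
ring `O`, a uniformizer `ϖ` generating the maximal ideal, finiteness of the residue
field, compatibility of the topology with the valuation, and local compactness
(equivalently, completeness). -/
structure NALF (F : Type) [Field F] [TopologicalSpace F] [IsTopologicalRing F] where
  O : Subring F
  isValRing : ∀ x : F, x ≠ 0 → x ∈ O ∨ x⁻¹ ∈ O
  ϖ : F
  ϖ_mem : ϖ ∈ O
  ϖ_ne_zero : ϖ ≠ 0
  ϖ_not_unit : ϖ⁻¹ ∉ O
  ϖ_gen : ∀ x ∈ O, x⁻¹ ∉ O → x / ϖ ∈ O
  residue_finite : Finite (↥O ⧸ Ideal.span {(⟨ϖ, ϖ_mem⟩ : ↥O)})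
  nhds_zero : ∀ s : Set F, s ∈ nhds (0 : F) ↔ ∃ n : ℕ, {x : F | ∃ y ∈ O, x = ϖ ^ n * y} ⊆ s
  locallyCompact : LocallyCompactSpace F

variable (F : Type) [Field F]

lemma GL2.inv_entry_ne (g : GL (Fin 2) F)
    (hg : (g : Matrix (Fin 2) (Fin 2) F) 1 0 = 0) :
    ((g⁻¹ : GL (Fin 2) F) : Matrix (Fin 2) (Fin 2) F) 1 0 = 0 := by
  have hAC : (g : Matrix (Fin 2) (Fin 2) F) * ((g⁻¹ : GL (Fin 2) F) : Matrix (Fin 2) (Fin 2) F)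
      = 1 := by
    rw [← Units.val_mul, mul_inv_cancel, Units.val_one]
  have h1 : ((g : Matrix (Fin 2) (Fin 2) F) *
      ((g⁻¹ : GL (Fin 2) F) : Matrix (Fin 2) (Fin 2) F)) 1 0 = 0 := by
    rw [hAC]; exact Matrix.one_apply_ne (by decide)
  have h2 : ((g : Matrix (Fin 2) (Fin 2) F) *
      ((g⁻¹ : GL (Fin 2) F) : Matrix (Fin 2) (Fin 2) F)) 1 1 = 1 := by
    rw [hAC]; exact Matrix.one_apply_eq 1
  rw [Matrix.mul_apply, Fin.sum_univ_two, hg, zero_mul, zero_add] at h1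
  rw [Matrix.mul_apply, Fin.sum_univ_two, hg, zero_mul, zero_add] at h2
  rcases mul_eq_zero.mp h1 with h | h
  · exact absurd h2 (by rw [h, zero_mul]; exact zero_ne_one)
  · exact h

/-- The upper triangular (Borel) subgroup `B ⊆ GL(2,F)`. -/
def Bgr : Subgroup (GL (Fin 2) F) where
  carrier := {g | (g : Matrix (Fin 2) (Fin 2) F) 1 0 = 0}
  one_mem' := by
    show ((1 : GL (Fin 2) F) : Matrix (Fin 2) (Fin 2) F) 1 0 = 0
    rw [Units.val_one]; exact Matrix.one_apply_ne (by decide)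
  mul_mem' := by
    intro a b ha hb
    show ((a * b : GL (Fin 2) F) : Matrix (Fin 2) (Fin 2) F) 1 0 = 0
    rw [Units.val_mul, Matrix.mul_apply, Fin.sum_univ_two]
    simp only [Set.mem_setOf_eq] at ha hb
    rw [ha, hb, zero_mul, mul_zero, add_zero]
  inv_mem' := by
    intro a ha
    exact GL2.inv_entry_ne F a ha

/-- The maximal compact subgroup `K = GL(2, O_F)` of `GL(2,F)`. -/
def Kgr (O : Subring F) : Subgroup (GL (Fin 2) F) where
  carrier := {g | (∀ i j, (g : Matrix (Fin 2) (Fin 2) F) i j ∈ O) ∧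
      (∀ i j, ((g⁻¹ : GL (Fin 2) F) : Matrix (Fin 2) (Fin 2) F) i j ∈ O)}
  one_mem' := by
    constructor <;>
    · intro i j
      simp only [inv_one, Units.val_one]
      by_cases h : i = j
      · rw [h, Matrix.one_apply_eq]; exact O.one_mem
      · rw [Matrix.one_apply_ne h]; exact O.zero_mem
  mul_mem' := by
    rintro a b ⟨ha1, ha2⟩ ⟨hb1, hb2⟩
    constructor
    · intro i j
      rw [Units.val_mul, Matrix.mul_apply]
      exact Subring.sum_mem O fun k _ => O.mul_mem (ha1 i k) (hb1 k j)
    · intro i j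
      rw [_root_.mul_inv_rev, Units.val_mul, Matrix.mul_apply]
      exact Subring.sum_mem O fun k _ => O.mul_mem (hb2 i k) (ha2 k j)
  inv_mem' := by
    rintro a ⟨ha1, ha2⟩
    refine ⟨ha2, ?_⟩
    rw [inv_inv]
    exact ha1

/-- For a subgroup `A` of a group `G`, the subgroup `A · Z(G)`. -/
def centMul {G : Type} [Group G] (A : Subgroup G) : Subgroup G where
  carrier := {g | ∃ a ∈ A, ∃ z ∈ Subgroup.center G, g = a * z}
  one_mem' := ⟨1, A.one_mem, 1, (Subgroup.center G).one_mem, (one_mul 1).symm⟩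
  mul_mem' := by
    rintro x y ⟨a, ha, z, hz, rfl⟩ ⟨a', ha', z', hz', rfl⟩
    refine ⟨a * a', A.mul_mem ha ha', z * z', (Subgroup.center G).mul_mem hz hz', ?_⟩
    have hcz : a' * z = z * a' := Subgroup.mem_center_iff.mp hz a'
    calc a * z * (a' * z') = a * (z * a' * z') := by
          rw [mul_assoc]; rw [mul_assoc z a' z']
      _ = a * (a' * z * z') := by rw [← hcz]
      _ = a * a' * (z * z') := by rw [mul_assoc a a']; rw [mul_assoc a' z z']
  inv_mem' := by
    rintro x ⟨a, ha, z, hz, rfl⟩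
    refine ⟨a⁻¹, A.inv_mem ha, z⁻¹, (Subgroup.center G).inv_mem hz, ?_⟩
    rw [_root_.mul_inv_rev]
    exact (Subgroup.mem_center_iff.mp ((Subgroup.center G).inv_mem hz) a⁻¹).symm

variable [TopologicalSpace F] [IsTopologicalRing F] (L : NALF F)

/-- The element `t = diag(ϖ, 1)`. -/
def tGL : GL (Fin 2) F :=
  Matrix.GeneralLinearGroup.mkOfDetNeZero !![L.ϖ, 0; 0, 1]
    (by rw [Matrix.det_fin_two_of]; simpa using L.ϖ_ne_zero)

lemma tGL_val : (tGL F L : Matrix (Fin 2) (Fin 2) F) = !![L.ϖ, 0; 0, 1] := rfl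

/-- The unipotent element `u(x) = (1 x; 0 1)`. -/
def uGL (x : F) : GL (Fin 2) F :=
  Matrix.GeneralLinearGroup.mkOfDetNeZero !![1, x; 0, 1]
    (by rw [Matrix.det_fin_two_of]; simp)

lemma uGL_val (x : F) : (uGL F x : Matrix (Fin 2) (Fin 2) F) = !![1, x; 0, 1] := rfl

/-- The element `ω = (0 1; ϖ 0)`. -/
def ωGL : GL (Fin 2) F :=
  Matrix.GeneralLinearGroup.mkOfDetNeZero !![0, 1; L.ϖ, 0]
    (by rw [Matrix.det_fin_two_of]; simpa using L.ϖ_ne_zero)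

lemma ωGL_val : (ωGL F L : Matrix (Fin 2) (Fin 2) F) = !![0, 1; L.ϖ, 0] := rfl

/-- `B₀ = B ∩ K`: integral upper triangular matrices with unit diagonal. -/
def B0gr : Subgroup (GL (Fin 2) F) := Bgr F ⊓ Kgr F L.O

/-- The subgroup `KZ`. -/
def KZgr : Subgroup (GL (Fin 2) F) := centMul (Kgr F L.O)

/-- The subgroup `B₀Z`. -/
def B0Zgr : Subgroup (GL (Fin 2) F) := centMul (B0gr F L)

/-- The monoid `B⁺ = ⋃ₙ B₀ Z tⁿ`, as a subset of `GL(2,F)`. -/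
def BplusGL : Set (GL (Fin 2) F) :=
  {g | ∃ b ∈ B0Zgr F L, ∃ n : ℕ, g = b * (tGL F L) ^ n}

lemma tGL_mem_Bgr : tGL F L ∈ Bgr F := by
  show (tGL F L : Matrix (Fin 2) (Fin 2) F) 1 0 = 0
  rw [tGL_val]
  simp

lemma uGL_mem_Bgr (x : F) : uGL F x ∈ Bgr F := by
  show (uGL F x : Matrix (Fin 2) (Fin 2) F) 1 0 = 0
  rw [uGL_val]
  simp

/-- `t` as an element of `B`. -/
def tB : ↥(Bgr F) := ⟨tGL F L, tGL_mem_Bgr F L⟩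

/-- `u(x)` as an element of `B`. -/
def uB (x : F) : ↥(Bgr F) := ⟨uGL F x, uGL_mem_Bgr F x⟩

/-- The monoid `B⁺` as a subset of `B`. -/
def BplusB : Set ↥(Bgr F) := {b | (b : GL (Fin 2) F) ∈ BplusGL F L}

/-- The subgroup `B₀Z` of `B`. -/
def B0Zb : Subgroup ↥(Bgr F) := (B0Zgr F L).comap (Bgr F).subtype

/-- The subgroup `B ∩ KZ` of `B`. -/
def BcapKZb : Subgroup ↥(Bgr F) := (KZgr F L).comap (Bgr F).subtype

/-- The compact group `U₀ = U(O_F)` of integral upper unipotent matrices, as a subset. -/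
def U0set : Set (GL (Fin 2) F) :=
  {g | (g : Matrix (Fin 2) (Fin 2) F) 0 0 = 1 ∧ (g : Matrix (Fin 2) (Fin 2) F) 1 1 = 1 ∧
    (g : Matrix (Fin 2) (Fin 2) F) 1 0 = 0 ∧ (g : Matrix (Fin 2) (Fin 2) F) 0 1 ∈ L.O}

/-- `U_m = U(p_F^m O_F)`, as a subset of `GL(2,F)`. -/
def UmSet (m : ℕ) : Set (GL (Fin 2) F) :=
  {g | (g : Matrix (Fin 2) (Fin 2) F) 0 0 = 1 ∧ (g : Matrix (Fin 2) (Fin 2) F) 1 1 = 1 ∧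
    (g : Matrix (Fin 2) (Fin 2) F) 1 0 = 0 ∧
    ∃ y ∈ L.O, (g : Matrix (Fin 2) (Fin 2) F) 0 1 = L.ϖ ^ m * y}

/-- `U_m⁻ = U⁻(p_F^m O_F)`, the lower unipotent congruence subgroups, as a subset. -/
def UmMinusSet (m : ℕ) : Set (GL (Fin 2) F) :=
  {g | (g : Matrix (Fin 2) (Fin 2) F) 0 0 = 1 ∧ (g : Matrix (Fin 2) (Fin 2) F) 1 1 = 1 ∧
    (g : Matrix (Fin 2) (Fin 2) F) 0 1 = 0 ∧
    ∃ y ∈ L.O, (g : Matrix (Fin 2) (Fin 2) F) 1 0 = L.ϖ ^ m * y}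

/-- `T₀ = T(O_F)`: diagonal matrices with unit entries in `O_F`, as a subset. -/
def T0set : Set (GL (Fin 2) F) :=
  {g | (g : Matrix (Fin 2) (Fin 2) F) 1 0 = 0 ∧ (g : Matrix (Fin 2) (Fin 2) F) 0 1 = 0 ∧
    (g : Matrix (Fin 2) (Fin 2) F) 0 0 ∈ L.O ∧ ((g : Matrix (Fin 2) (Fin 2) F) 0 0)⁻¹ ∈ L.O ∧
    (g : Matrix (Fin 2) (Fin 2) F) 1 1 ∈ L.O ∧ ((g : Matrix (Fin 2) (Fin 2) F) 1 1)⁻¹ ∈ L.O}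

/-- The Iwahori subgroup `I ⊆ K`, as a subset: integral matrices whose reduction is
upper triangular. -/
def Iset : Set (GL (Fin 2) F) :=
  {g | g ∈ Kgr F L.O ∧ ∃ y ∈ L.O, (g : Matrix (Fin 2) (Fin 2) F) 1 0 = L.ϖ * y}

/-- The pro-`p` Iwahori subgroup `I₁ ⊆ I`, as a subset: integral matrices whose
reduction is upper unipotent. -/
def I1set : Set (GL (Fin 2) F) :=
  {g | g ∈ Kgr F L.O ∧ (∃ y ∈ L.O, (g : Matrix (Fin 2) (Fin 2) F) 1 0 = L.ϖ * y) ∧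
    (∃ y ∈ L.O, (g : Matrix (Fin 2) (Fin 2) F) 0 0 - 1 = L.ϖ * y) ∧
    (∃ y ∈ L.O, (g : Matrix (Fin 2) (Fin 2) F) 1 1 - 1 = L.ϖ * y)}

/-- The set `IZ`. -/
def IZset : Set (GL (Fin 2) F) :=
  {g | ∃ i ∈ Iset F L, ∃ z ∈ Subgroup.center (GL (Fin 2) F), g = i * z}

/-- The set `ωIZ`. -/
def ωIZset : Set (GL (Fin 2) F) := {g | ∃ h ∈ IZset F L, g = ωGL F L * h}

section Abstract

/-- The group action as a monoid homomorphism into `o`-linear endomorphisms. -/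
def actHom (o : Type) [CommRing o] (H : Type) [Group H] (W : Type) [AddCommGroup W]
    [Module o W] [DistribMulAction H W] [SMulCommClass H o W] : H →* Module.End o W where
  toFun g := actLin o H W g
  map_one' := LinearMap.ext fun v => one_smul H v
  map_mul' g h := LinearMap.ext fun v => mul_smul g h v

lemma gspan_univ_stable (o : Type) [CommRing o] {H : Type} [Group H] {W : Type}
    [AddCommGroup W] [Module o W] [DistribMulAction H W] [SMulCommClass H o W]
    (X : Set W) (g : H) (v : W)
    (hv : v ∈ gspan o W (Set.univ : Set H) X) : g • v ∈ gspan o W (Set.univ : Set H) X := by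
  induction hv using Submodule.span_induction with
  | mem x hx =>
      obtain ⟨s, -, w, hw, rfl⟩ := hx
      exact Submodule.subset_span ⟨g * s, trivial, w, hw, (mul_smul g s w).symm⟩
  | zero => rw [smul_zero]; exact Submodule.zero_mem _
  | add x y _ _ hx hy => rw [smul_add]; exact Submodule.add_mem _ hx hy
  | smul c x _ hx => rw [smul_comm]; exact Submodule.smul_mem _ c hx

theorem abstract_fg (o : Type) [CommRing o] [IsNoetherianRing o]
    {H : Type} [Group H]
    {W : Type} [AddCommGroup W] [Module o W] [DistribMulAction H W] [SMulCommClass H o W]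
    (ζ : H) (C : Set H)
    (hdec : ∀ h : H, ∃ c ∈ C, ∃ m : ℤ, h = ζ ^ m * c)
    (horb : ∀ v : W, {w : W | ∃ c ∈ C, w = c • v}.Finite)
    (hfg : ∃ X : Finset W, gspan o W (Set.univ : Set H) (X : Set W) = ⊤)
    (N : Submodule o W) (hN : IsStableSub o W (Set.univ : Set H) N) :
    IsFGOver o W (Set.univ : Set H) N := by
  classical
  obtain ⟨X, hX⟩ := hfg
  haveI := LaurentPolynomial.isLocalization (R := o)
  haveI : IsNoetherianRing (LaurentPolynomial o) :=
    IsLocalization.isNoetherianRing (Submonoid.powers (Polynomial.X : Polynomial o)) _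
      inferInstance
  set A := LaurentPolynomial o with hA
  let φ : A →ₐ[o] Module.End o W :=
    AddMonoidAlgebra.lift o (Module.End o W) ℤ ((actHom o H W).comp (zpowersHom H ζ))
  letI modA : Module A W := Module.compHom W (φ.toRingHom : A →+* Module.End o W)
  have hsmul : ∀ (a : A) (w : W), a • w = φ a w := fun a w => rfl
  let sg : ℤ → o → A := fun m c => AddMonoidAlgebra.single m c
  have hsingle : ∀ (m : ℤ) (c : o) (w : W),
      sg m c • w = c • (ζ ^ m • w) := by
    intro m c w
    rw [hsmul]
    show (φ (AddMonoidAlgebra.single m c)) w = _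
    rw [AddMonoidAlgebra.lift_single]
    simp [actHom, actLin, MonoidHom.comp_apply, zpowersHom_apply]
  have hstab : ∀ P : Submodule o W, (∀ (g : H) (w : W), w ∈ P → g • w ∈ P) →
      ∀ (a : A) (w : W), w ∈ P → a • w ∈ P := by
    intro P hP a
    induction a using AddMonoidAlgebra.induction with
    | zero => intro w hw; rw [hsmul, map_zero]; exact P.zero_mem
    | single_add m c f hf hc ih =>
        intro w hw
        rw [hsmul, map_add, LinearMap.add_apply]
        refine P.add_mem ?_ (by rw [← hsmul f w]; exact ih w hw)
        rw [← hsmul, hsingle]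
        exact P.smul_mem c (hP _ _ hw)
  let Y : Finset W := X.biUnion fun x => (horb x).toFinset
  have hY : ∀ x ∈ X, ∀ c ∈ C, c • x ∈ Y := by
    intro x hx c hc
    exact Finset.mem_biUnion.2 ⟨x, hx, (horb x).mem_toFinset.2 ⟨c, hc, rfl⟩⟩
  have hspanY : Submodule.span A (Y : Set W) = ⊤ := by
    rw [eq_top_iff]
    intro w _
    have hw : w ∈ gspan o W (Set.univ : Set H) (X : Set W) := by rw [hX]; trivial
    refine Submodule.span_induction ?_ ?_ ?_ ?_ hw
    · rintro v ⟨g, -, x, hx, rfl⟩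
      obtain ⟨c, hc, m, rfl⟩ := hdec g
      have h1 : (ζ ^ m * c) • x = sg m 1 • (c • x) := by
        rw [hsingle, one_smul, mul_smul]
      rw [h1]
      exact Submodule.smul_mem _ _ (Submodule.subset_span (hY x hx c hc))
    · exact Submodule.zero_mem _
    · intro a b _ _ ha hb; exact Submodule.add_mem _ ha hb
    · intro r v _ hv
      have h2 : r • v = sg 0 r • v := by
        rw [hsingle, zpow_zero, one_smul]
      rw [h2]
      exact Submodule.smul_mem _ _ hv
  haveI : Module.Finite A W := ⟨⟨Y, hspanY⟩⟩
  haveI : IsNoetherian A W := isNoetherian_of_isNoetherianRing_of_finite A W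
  let NA : Submodule A W :=
    { carrier := (N : Set W)
      add_mem' := fun h1 h2 => N.add_mem h1 h2
      zero_mem' := N.zero_mem
      smul_mem' := fun a {w} hw =>
        hstab N (fun g w hw => hN g trivial w hw) a w hw }
  obtain ⟨S, hS⟩ := IsNoetherian.noetherian NA
  have hSN : (S : Set W) ⊆ (N : Set W) := by
    intro x hx
    have hx' : x ∈ NA := by rw [← hS]; exact Submodule.subset_span hx
    exact hx'
  refine ⟨S, hSN, le_antisymm ?_ ?_⟩
  · intro w hw
    have hw' : w ∈ Submodule.span A (S : Set W) := by rw [hS]; exact hw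
    refine Submodule.span_induction ?_ ?_ ?_ ?_ hw'
    · intro x hx
      exact Submodule.subset_span ⟨1, trivial, x, hx, (one_smul H x).symm⟩
    · exact Submodule.zero_mem _
    · intro a b _ _ ha hb; exact Submodule.add_mem _ ha hb
    · intro a v _ hv
      exact hstab _ (fun g w hw => gspan_univ_stable o _ g w hw) a v hv
  · rw [gspan]
    apply Submodule.span_le.2
    rintro v ⟨g, -, x, hx, rfl⟩
    exact hN g trivial x (hSN hx)

end Abstract

/-! ### Valuation-theoretic lemmas -/

section ValLemmas

variable {F : Type} [Field F] [TopologicalSpace F] [IsTopologicalRing F] (L : NALF F)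

lemma NALF.pow_set_mem_nhds (n : ℕ) :
    {x : F | ∃ y ∈ L.O, x = L.ϖ ^ n * y} ∈ nhds (0 : F) :=
  (L.nhds_zero _).2 ⟨n, subset_rfl⟩

lemma NALF.exists_not_dvd {lam : F} (h : lam ≠ 0) :
    ∃ n : ℕ, ¬ ∃ y ∈ L.O, lam = L.ϖ ^ n * y := by
  by_contra hc
  push_neg at hc
  have h1 : {x : F | ∃ y ∈ L.O, x = L.ϖ ^ 1 * y} ∈ nhds (0 : F) := L.pow_set_mem_nhds 1
  have hcont : ContinuousAt (fun x : F => lam⁻¹ * x) 0 := (continuous_mul_left _).continuousAt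
  have h2 : (fun x : F => lam⁻¹ * x) ⁻¹' {x : F | ∃ y ∈ L.O, x = L.ϖ ^ 1 * y}
      ∈ nhds (0 : F) := hcont.preimage_mem_nhds (by simpa using h1)
  obtain ⟨k, hk⟩ := (L.nhds_zero _).1 h2
  have h3 : lam ∈ (fun x : F => lam⁻¹ * x) ⁻¹' {x : F | ∃ y ∈ L.O, x = L.ϖ ^ 1 * y} := by
    apply hk
    obtain ⟨y, hy, hyy⟩ := hc k
    exact ⟨y, hy, hyy⟩
  obtain ⟨y, hy, hyy⟩ := h3
  simp only [inv_mul_cancel₀ h, pow_one] at hyy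
  have : L.ϖ⁻¹ = y := inv_eq_of_mul_eq_one_right hyy.symm
  exact L.ϖ_not_unit (this ▸ hy)

lemma NALF.unit_decomp_nat : ∀ (n : ℕ) (lam : F), lam ≠ 0 → lam ∈ L.O →
    (¬ ∃ y ∈ L.O, lam = L.ϖ ^ n * y) →
    ∃ (k : ℕ) (u : F), u ∈ L.O ∧ u⁻¹ ∈ L.O ∧ lam = L.ϖ ^ k * u := by
  intro n
  induction n with
  | zero => exact fun lam h1 h2 h3 => absurd ⟨lam, h2, by rw [pow_zero, one_mul]⟩ h3
  | succ n ih =>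
    intro lam h1 h2 h3
    by_cases hu : lam⁻¹ ∈ L.O
    · exact ⟨0, lam, h2, hu, by rw [pow_zero, one_mul]⟩
    · have hd : lam / L.ϖ ∈ L.O := L.ϖ_gen lam h2 hu
      have hne : lam / L.ϖ ≠ 0 := div_ne_zero h1 L.ϖ_ne_zero
      have heq : L.ϖ * (lam / L.ϖ) = lam := by
        rw [mul_comm, div_mul_cancel₀ _ L.ϖ_ne_zero]
      have h4 : ¬ ∃ y ∈ L.O, lam / L.ϖ = L.ϖ ^ n * y := by
        rintro ⟨y, hy, hyy⟩
        exact h3 ⟨y, hy, by rw [← heq, hyy, pow_succ]; ring⟩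
      obtain ⟨k, u, hu1, hu2, hu3⟩ := ih (lam / L.ϖ) hne hd h4
      exact ⟨k + 1, u, hu1, hu2, by rw [← heq, hu3, pow_succ]; ring⟩

lemma NALF.unit_decomp {lam : F} (h : lam ≠ 0) :
    ∃ (m : ℤ) (u : F), u ∈ L.O ∧ u⁻¹ ∈ L.O ∧ lam = L.ϖ ^ m * u := by
  rcases L.isValRing lam h with h2 | h2
  · obtain ⟨n, hn⟩ := L.exists_not_dvd h
    obtain ⟨k, u, hu1, hu2, hu3⟩ := L.unit_decomp_nat n lam h h2 hn
    exact ⟨(k : ℤ), u, hu1, hu2, by rw [zpow_natCast]; exact hu3⟩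
  · have h' : lam⁻¹ ≠ 0 := inv_ne_zero h
    obtain ⟨n, hn⟩ := L.exists_not_dvd h'
    obtain ⟨k, u, hu1, hu2, hu3⟩ := L.unit_decomp_nat n lam⁻¹ h' h2 hn
    refine ⟨-(k : ℤ), u⁻¹, hu2, by rwa [inv_inv], ?_⟩
    have := congrArg Inv.inv hu3
    rw [inv_inv, mul_inv] at this
    rw [_root_.zpow_neg, zpow_natCast]
    exact this

lemma NALF.pow_downgrade {k n : ℕ} (hkn : k ≤ n) {x : F}
    (h : ∃ y ∈ L.O, x = L.ϖ ^ n * y) : ∃ y ∈ L.O, x = L.ϖ ^ k * y := by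
  obtain ⟨y, hy, hyy⟩ := h
  refine ⟨L.ϖ ^ (n - k) * y, L.O.mul_mem (Subring.pow_mem _ L.ϖ_mem _) hy, ?_⟩
  rw [hyy, ← mul_assoc, ← pow_add, Nat.add_sub_cancel' hkn]

lemma NALF.pow_downgrade' {k n : ℕ} (hkn : k ≤ n) {x a : F}
    (h : ∃ y ∈ L.O, x - a = L.ϖ ^ n * y) : ∃ y ∈ L.O, x - a = L.ϖ ^ k * y :=
  L.pow_downgrade hkn h

lemma NALF.mem_of_near {s : Set F} {a : F} (hs : s ∈ nhds a) :
    ∃ n : ℕ, ∀ x : F, (∃ y ∈ L.O, x - a = L.ϖ ^ n * y) → x ∈ s := by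
  have hcont : ContinuousAt (fun x : F => x + a) 0 := (continuous_add_right a).continuousAt
  have h2 : (fun x : F => x + a) ⁻¹' s ∈ nhds (0 : F) :=
    hcont.preimage_mem_nhds (by simpa using hs)
  obtain ⟨n, hn⟩ := (L.nhds_zero _).1 h2
  refine ⟨n, fun x hx => ?_⟩
  have : x - a ∈ (fun x : F => x + a) ⁻¹' s := hn hx
  simpa using this

lemma NALF.matrix_mem_of_near {s : Set (Matrix (Fin 2) (Fin 2) F)}
    {A0 : Matrix (Fin 2) (Fin 2) F} (hs : s ∈ nhds A0) :
    ∃ n : ℕ, ∀ A : Matrix (Fin 2) (Fin 2) F,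
      (∀ i j, ∃ y ∈ L.O, A i j - A0 i j = L.ϖ ^ n * y) → A ∈ s := by
  obtain ⟨U, hUs, hUo, hA0U⟩ := mem_nhds_iff.1 hs
  obtain ⟨I, u, hu, hIU⟩ := isOpen_pi_iff.1 hUo A0 hA0U
  have step : ∀ i ∈ I, ∃ n : ℕ, ∀ r : Fin 2 → F,
      (∀ j, ∃ y ∈ L.O, r j - A0 i j = L.ϖ ^ n * y) → r ∈ u i := by
    intro i hi
    obtain ⟨J, w, hw, hJu⟩ := isOpen_pi_iff.1 (hu i hi).1 (A0 i) (hu i hi).2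
    have step2 : ∀ j ∈ J, ∃ n : ℕ, ∀ x : F,
        (∃ y ∈ L.O, x - A0 i j = L.ϖ ^ n * y) → x ∈ w j := fun j hj =>
      L.mem_of_near ((hw j hj).1.mem_nhds (hw j hj).2)
    choose! n2 hn2 using step2
    refine ⟨J.sup n2, fun r hr => hJu ?_⟩
    rw [Set.mem_pi]
    intro j hj
    exact hn2 j hj (r j) (L.pow_downgrade' (Finset.le_sup hj) (hr j))
  choose! n1 hn1 using step
  refine ⟨I.sup n1, fun A hA => hUs (hIU ?_)⟩
  refine Set.mem_pi.2 ?_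
  intro i hi
  exact hn1 i hi (A i) fun j => L.pow_downgrade' (Finset.le_sup hi) (hA i j)

end ValLemmas

/-! ### Scalar matrices and the center of `GL(2,F)` -/

section Scalars

variable (F : Type) [Field F] [TopologicalSpace F] [IsTopologicalRing F]

/-- The scalar embedding `Fˣ →* GL(2,F)`. -/
def scalarM : Fˣ →* GL (Fin 2) F := Units.map (Matrix.scalar (Fin 2)).toMonoidHom

lemma scalarM_val (w : Fˣ) :
    (scalarM F w : Matrix (Fin 2) (Fin 2) F) = Matrix.scalar (Fin 2) (w : F) := rfl

lemma scalarM_val_apply (w : Fˣ) (i j : Fin 2) :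
    (scalarM F w : Matrix (Fin 2) (Fin 2) F) i j = if i = j then (w : F) else 0 := by
  rw [scalarM_val, Matrix.scalar_apply, Matrix.diagonal_apply]

lemma scalarM_mem_center (w : Fˣ) :
    scalarM F w ∈ Subgroup.center (GL (Fin 2) F) := by
  rw [Subgroup.mem_center_iff]
  intro g
  apply Units.ext
  rw [Units.val_mul, Units.val_mul, scalarM_val]
  exact (Matrix.scalar_commute (w : F) (fun r => mul_comm _ r) _).symm

/-- The lower unipotent test element `(1 0; 1 1)`. -/
def lowGL : GL (Fin 2) F :=
  Matrix.GeneralLinearGroup.mkOfDetNeZero !![1, 0; 1, 1]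
    (by rw [Matrix.det_fin_two_of]; simp)

lemma lowGL_val : (lowGL F : Matrix (Fin 2) (Fin 2) F) = !![1, 0; 1, 1] := rfl

lemma center_eq_scalar {z : GL (Fin 2) F} (hz : z ∈ Subgroup.center (GL (Fin 2) F)) :
    ∃ w : Fˣ, z = scalarM F w := by
  have hu := congrArg Units.val (Subgroup.mem_center_iff.1 hz (uGL F 1))
  have hl := congrArg Units.val (Subgroup.mem_center_iff.1 hz (lowGL F))
  rw [Units.val_mul, Units.val_mul, uGL_val] at hu
  rw [Units.val_mul, Units.val_mul, lowGL_val] at hl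
  set M := (z : Matrix (Fin 2) (Fin 2) F) with hM
  have e00 := congrFun (congrFun hu 0) 0
  have e01 := congrFun (congrFun hu 0) 1
  have f00 := congrFun (congrFun hl 0) 0
  simp only [Matrix.mul_apply, Fin.sum_univ_two, Matrix.cons_val', Matrix.cons_val_zero,
    Matrix.cons_val_one, Matrix.head_cons, Matrix.head_fin_const, Matrix.empty_val',
    Matrix.cons_val_fin_one, Matrix.of_apply, one_mul, mul_one, zero_mul, mul_zero,
    add_zero, zero_add] at e00 e01 f00
  -- e00 : M 0 0 + M 1 0 = M 0 0 ; e01 : M 0 1 + M 1 1 = M 0 0 + M 0 1 ; f00 : M 0 0 = M 0 0 + M 0 1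
  have h10 : M 1 0 = 0 := by linear_combination e00
  have h01 : M 0 1 = 0 := by linear_combination -f00
  have h11 : M 1 1 = M 0 0 := by linear_combination e01
  have hdet : M.det ≠ 0 := by
    intro h0
    have : IsUnit M.det := (Matrix.isUnit_iff_isUnit_det M).1 z.isUnit
    exact this.ne_zero h0
  rw [Matrix.det_fin_two, h10, h01, h11, mul_zero, sub_zero] at hdet
  have ha : M 0 0 ≠ 0 := fun h0 => hdet (by rw [h0, mul_zero])
  refine ⟨Units.mk0 (M 0 0) ha, ?_⟩
  apply Units.ext
  rw [scalarM_val, Matrix.scalar_apply]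
  show M = _
  conv_lhs => rw [Matrix.eta_fin_two M]
  rw [h10, h01, h11]
  ext i j
  fin_cases i <;> fin_cases j <;> simp [Matrix.diagonal]

end Scalars

section Decomp

variable (F : Type) [Field F] [TopologicalSpace F] [IsTopologicalRing F] (L : NALF F)

/-- The central element `ζ = ϖ·id` of `B₀Z`. -/
def zetaH : ↥(B0Zgr F L) :=
  ⟨scalarM F (Units.mk0 L.ϖ L.ϖ_ne_zero),
    ⟨1, (B0gr F L).one_mem, _, scalarM_mem_center F _, (one_mul _).symm⟩⟩

lemma scalarM_mem_Kgr {u : F} (hu : u ∈ L.O) (hu' : u⁻¹ ∈ L.O) (h0 : u ≠ 0) :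
    scalarM F (Units.mk0 u h0) ∈ Kgr F L.O := by
  constructor
  · intro i j
    rw [scalarM_val_apply]
    split
    · exact hu
    · exact L.O.zero_mem
  · intro i j
    rw [← map_inv]
    rw [scalarM_val_apply]
    split
    · simpa using hu'
    · exact L.O.zero_mem

lemma decompB0Z (h : ↥(B0Zgr F L)) :
    ∃ c : ↥(B0Zgr F L), (↑c : GL (Fin 2) F) ∈ Kgr F L.O ∧
      ∃ m : ℤ, h = (zetaH F L) ^ m * c := by
  obtain ⟨b, hb, z, hz, heq⟩ := h.2
  obtain ⟨w, rfl⟩ := center_eq_scalar F hz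
  obtain ⟨m, u, hu1, hu2, hu3⟩ := L.unit_decomp w.ne_zero
  have h0 : u ≠ 0 := fun hh => w.ne_zero (by rw [hu3, hh, mul_zero])
  have hw : w = (Units.mk0 L.ϖ L.ϖ_ne_zero) ^ m * Units.mk0 u h0 := by
    apply Units.ext
    rw [Units.val_mul, Units.val_zpow_eq_zpow_val]
    simpa using hu3
  refine ⟨⟨b * scalarM F (Units.mk0 u h0),
      ⟨b, hb, _, scalarM_mem_center F _, rfl⟩⟩,
    (Kgr F L.O).mul_mem hb.2 (scalarM_mem_Kgr F L hu1 hu2 h0), m, ?_⟩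
  apply Subtype.ext
  show (h : GL (Fin 2) F) = ((zetaH F L) ^ m * _ : ↥(B0Zgr F L))
  rw [Subgroup.coe_mul, SubgroupClass.coe_zpow]
  show (h : GL (Fin 2) F) = (scalarM F (Units.mk0 L.ϖ L.ϖ_ne_zero)) ^ m *
    (b * scalarM F (Units.mk0 u h0))
  have hcen : b * (scalarM F (Units.mk0 L.ϖ L.ϖ_ne_zero)) ^ m
      = (scalarM F (Units.mk0 L.ϖ L.ϖ_ne_zero)) ^ m * b :=
    (Subgroup.mem_center_iff.1
      ((Subgroup.center (GL (Fin 2) F)).zpow_mem (scalarM_mem_center F _) m) b)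
  rw [heq, hw, _root_.map_mul, map_zpow]
  rw [← mul_assoc, hcen, mul_assoc]

end Decomp

section Congruence

variable {F : Type} [Field F] [TopologicalSpace F] [IsTopologicalRing F] (L : NALF F)

lemma open_one_congruence (Sset : Set ↥(B0Zgr F L)) (hopen : IsOpen Sset)
    (h1 : (1 : ↥(B0Zgr F L)) ∈ Sset) :
    ∃ n : ℕ, ∀ h : ↥(B0Zgr F L),
      (∀ i j, ∃ y ∈ L.O, ((h : GL (Fin 2) F) : Matrix (Fin 2) (Fin 2) F) i j
        - (1 : Matrix (Fin 2) (Fin 2) F) i j = L.ϖ ^ n * y) →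
      (∀ i j, ∃ y ∈ L.O, (((h : GL (Fin 2) F)⁻¹ : GL (Fin 2) F) : Matrix (Fin 2) (Fin 2) F) i j
        - (1 : Matrix (Fin 2) (Fin 2) F) i j = L.ϖ ^ n * y) →
      h ∈ Sset := by
  obtain ⟨U, hUo, hU⟩ := isOpen_induced_iff.1 hopen
  obtain ⟨V, hVo, hV⟩ := isOpen_induced_iff.1 hUo
  have h1U : (1 : GL (Fin 2) F) ∈ U := by
    rw [← hU] at h1; exact h1
  have h1V : Units.embedProduct _ (1 : GL (Fin 2) F) ∈ V := by
    rw [← hV] at h1U; exact h1U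
  obtain ⟨V1, V2, hV1o, hV2o, h1V1, h1V2, hV12⟩ := isOpen_prod_iff.1 hVo _ _ h1V
  have hV2o' : IsOpen (MulOpposite.op ⁻¹' V2 : Set (Matrix (Fin 2) (Fin 2) F)) :=
    hV2o.preimage MulOpposite.continuous_op
  have h1V1' : (1 : Matrix (Fin 2) (Fin 2) F) ∈ V1 := by
    simpa [Units.embedProduct_apply] using h1V1
  have h1V2' : (1 : Matrix (Fin 2) (Fin 2) F) ∈ MulOpposite.op ⁻¹' V2 := by
    simpa [Units.embedProduct_apply] using h1V2
  obtain ⟨n1, hn1⟩ := L.matrix_mem_of_near (hV1o.mem_nhds h1V1')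
  obtain ⟨n2, hn2⟩ := L.matrix_mem_of_near (hV2o'.mem_nhds h1V2')
  refine ⟨max n1 n2, fun h hc1 hc2 => ?_⟩
  have hmem : (h : GL (Fin 2) F) ∈ U := by
    rw [← hV]
    apply hV12
    rw [Units.embedProduct_apply, Set.mem_prod]
    constructor
    · exact hn1 _ fun i j => L.pow_downgrade' (le_max_left n1 n2) (hc1 i j)
    · show MulOpposite.op _ ∈ V2
      exact hn2 _ (fun i j => L.pow_downgrade' (le_max_right n1 n2) (hc2 i j))
  rw [← hU]
  exact hmem

lemma NALF.finite_reps (n : ℕ) :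
    ∃ T : Finset F, ∀ x ∈ L.O, ∃ t ∈ T, ∃ y ∈ L.O, x - t = L.ϖ ^ n * y := by
  induction n with
  | zero =>
      exact ⟨{0}, fun x hx =>
        ⟨0, Finset.mem_singleton_self 0, x, hx, by rw [pow_zero, one_mul, sub_zero]⟩⟩
  | succ n ih =>
      obtain ⟨T, hT⟩ := ih
      haveI := L.residue_finite
      set I := Ideal.span {(⟨L.ϖ, L.ϖ_mem⟩ : ↥L.O)} with hI
      haveI : Fintype (↥L.O ⧸ I) := Fintype.ofFinite _
      let sec : (↥L.O ⧸ I) → ↥L.O := Function.surjInv Ideal.Quotient.mk_surjective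
      have hsec : ∀ q, Ideal.Quotient.mk I (sec q) = q :=
        Function.surjInv_eq Ideal.Quotient.mk_surjective
      let T1 : Finset F := Finset.univ.image fun q : ↥L.O ⧸ I => ((sec q : ↥L.O) : F)
      refine ⟨T1.biUnion fun t1 => T.image fun t => t1 + L.ϖ * t, ?_⟩
      intro x hx
      set q := Ideal.Quotient.mk I (⟨x, hx⟩ : ↥L.O) with hq
      have hdiff : (⟨x, hx⟩ : ↥L.O) - sec q ∈ I := by
        rw [← Ideal.Quotient.eq_zero_iff_mem, RingHom.map_sub, hsec, ← hq, sub_self]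
      rw [hI, Ideal.mem_span_singleton] at hdiff
      obtain ⟨c, hc⟩ := hdiff
      have hcF : x - ((sec q : ↥L.O) : F) = L.ϖ * (c : F) := by
        have := congrArg (fun z : ↥L.O => (z : F)) hc
        simpa using this
      obtain ⟨t, ht, y, hy, hyy⟩ := hT (c : F) c.2
      refine ⟨((sec q : ↥L.O) : F) + L.ϖ * t, ?_, y, hy, ?_⟩
      · refine Finset.mem_biUnion.2 ⟨((sec q : ↥L.O) : F), ?_, ?_⟩
        · exact Finset.mem_image.2 ⟨q, Finset.mem_univ q, rfl⟩
        · exact Finset.mem_image.2 ⟨t, ht, rfl⟩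
      · have : x - (((sec q : ↥L.O) : F) + L.ϖ * t) = L.ϖ * ((c : F) - t) := by
          linear_combination hcF
        rw [this, hyy, pow_succ]
        ring

end Congruence

section Orbit

variable {F : Type} [Field F] [TopologicalSpace F] [IsTopologicalRing F] (L : NALF F)

lemma orbit_finite {W : Type} [MulAction (↥(B0Zgr F L)) W] (v : W)
    (hopen : IsOpen {h : ↥(B0Zgr F L) | h • v = v}) :
    {w : W | ∃ c : ↥(B0Zgr F L), (↑c : GL (Fin 2) F) ∈ Kgr F L.O ∧ w = c • v}.Finite := by
  classical
  obtain ⟨n, hn⟩ := open_one_congruence L _ hopen (one_smul _ v)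
  obtain ⟨T, hT⟩ := L.finite_reps n
  let r : ↥(B0Zgr F L) → Fin 2 → Fin 2 → F := fun c i j =>
    if hc : ∃ t, t ∈ T ∧ ∃ y ∈ L.O,
        ((c : GL (Fin 2) F) : Matrix (Fin 2) (Fin 2) F) i j - t = L.ϖ ^ n * y
    then hc.choose else 0
  have hr : ∀ (c : ↥(B0Zgr F L)), (↑c : GL (Fin 2) F) ∈ Kgr F L.O → ∀ i j,
      r c i j ∈ T ∧ ∃ y ∈ L.O,
        ((c : GL (Fin 2) F) : Matrix (Fin 2) (Fin 2) F) i j - r c i j = L.ϖ ^ n * y := by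
    intro c hc i j
    have hex : ∃ t, t ∈ T ∧ ∃ y ∈ L.O,
        ((c : GL (Fin 2) F) : Matrix (Fin 2) (Fin 2) F) i j - t = L.ϖ ^ n * y := by
      obtain ⟨t, ht, hy⟩ := hT _ (hc.1 i j)
      exact ⟨t, ht, hy⟩
    have hrc : r c i j = hex.choose := dif_pos hex
    rw [hrc]
    exact hex.choose_spec
  have hstep : ∀ d d' : ↥(B0Zgr F L), (↑d : GL (Fin 2) F) ∈ Kgr F L.O →
      (↑d' : GL (Fin 2) F) ∈ Kgr F L.O → r d = r d' → ∀ i j, ∃ y ∈ L.O,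
      (((d⁻¹ * d' : ↥(B0Zgr F L)) : GL (Fin 2) F) : Matrix (Fin 2) (Fin 2) F) i j
        - (1 : Matrix (Fin 2) (Fin 2) F) i j = L.ϖ ^ n * y := by
    intro d d' hd hd' hrr i j
    set X : Matrix (Fin 2) (Fin 2) F :=
      (((↑d : GL (Fin 2) F)⁻¹ : GL (Fin 2) F) : Matrix (Fin 2) (Fin 2) F) with hX
    set B : Matrix (Fin 2) (Fin 2) F := ((↑d : GL (Fin 2) F) : Matrix (Fin 2) (Fin 2) F)
    set B' : Matrix (Fin 2) (Fin 2) F := ((↑d' : GL (Fin 2) F) : Matrix (Fin 2) (Fin 2) F)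
    have hXB : X * B = 1 := by
      rw [hX, ← Units.val_mul, inv_mul_cancel, Units.val_one]
    have hone := congrFun (congrFun hXB i) j
    rw [Matrix.mul_apply, Fin.sum_univ_two] at hone
    have hk : ∀ k : Fin 2, ∃ y ∈ L.O, B' k j - B k j = L.ϖ ^ n * y := by
      intro k
      obtain ⟨-, y, hy, hyy⟩ := hr d hd k j
      obtain ⟨-, y', hy', hyy'⟩ := hr d' hd' k j
      have hre : r d k j = r d' k j := by rw [hrr]
      rw [hre] at hyy
      exact ⟨y' - y, L.O.sub_mem hy' hy, by linear_combination hyy' - hyy⟩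
    obtain ⟨y0, hy0, h0⟩ := hk 0
    obtain ⟨y1, hy1, h1⟩ := hk 1
    have hval : (((d⁻¹ * d' : ↥(B0Zgr F L)) : GL (Fin 2) F) : Matrix (Fin 2) (Fin 2) F) i j
        = X i 0 * B' 0 j + X i 1 * B' 1 j := by
      show (((↑d : GL (Fin 2) F)⁻¹ * (↑d' : GL (Fin 2) F) : GL (Fin 2) F)
          : Matrix (Fin 2) (Fin 2) F) i j = _
      rw [Units.val_mul, Matrix.mul_apply, Fin.sum_univ_two]
    refine ⟨X i 0 * y0 + X i 1 * y1,
      L.O.add_mem (L.O.mul_mem (hd.2 i 0) hy0) (L.O.mul_mem (hd.2 i 1) hy1), ?_⟩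
    rw [hval, ← hone]
    linear_combination X i 0 * h0 + X i 1 * h1
  have hkey : ∀ d d' : ↥(B0Zgr F L), (↑d : GL (Fin 2) F) ∈ Kgr F L.O →
      (↑d' : GL (Fin 2) F) ∈ Kgr F L.O → r d = r d' → d • v = d' • v := by
    intro d d' hd hd' hrr
    have h1 := hstep d d' hd hd' hrr
    have h2 := hstep d' d hd' hd hrr.symm
    have hinv : (d⁻¹ * d')⁻¹ = d'⁻¹ * d := by rw [_root_.mul_inv_rev, inv_inv]
    have hmem : (d⁻¹ * d') • v = v := by
      apply hn
      · exact h1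
      · intro i j
        have hcoe : (((d⁻¹ * d' : ↥(B0Zgr F L)) : GL (Fin 2) F)⁻¹ : GL (Fin 2) F)
            = ((d'⁻¹ * d : ↥(B0Zgr F L)) : GL (Fin 2) F) := by
          rw [← hinv]; rfl
        rw [hcoe]
        exact h2 i j
    calc d • v = d • ((d⁻¹ * d') • v) := by rw [hmem]
      _ = (d * (d⁻¹ * d')) • v := (mul_smul _ _ _).symm
      _ = d' • v := by rw [mul_inv_cancel_left]
  have hTfin : ({f : Fin 2 → Fin 2 → F | ∀ i j, f i j ∈ (T : Set F) ∪ {0}}).Finite := by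
    have hsf : ((T : Set F) ∪ {0}).Finite := T.finite_toSet.union (Set.finite_singleton 0)
    have h2 : ({g : Fin 2 → F | ∀ j, g j ∈ (T : Set F) ∪ {0}}).Finite := by
      refine (Set.Finite.pi fun _ : Fin 2 => hsf).subset ?_
      intro g hg
      rw [Set.mem_univ_pi]
      exact fun j => hg j
    refine (Set.Finite.pi fun _ : Fin 2 => h2).subset ?_
    intro f hf
    rw [Set.mem_univ_pi]
    exact fun i j => hf i j
  set g : (Fin 2 → Fin 2 → F) → W := fun f =>
    if hf : ∃ c : ↥(B0Zgr F L), (↑c : GL (Fin 2) F) ∈ Kgr F L.O ∧ r c = f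
    then hf.choose • v else v
    with hg
  refine (hTfin.image g).subset ?_
  rintro w ⟨c, hc, rfl⟩
  refine ⟨r c, fun i j => Or.inl (hr c hc i j).1, ?_⟩
  have hfex : ∃ c' : ↥(B0Zgr F L), (↑c' : GL (Fin 2) F) ∈ Kgr F L.O ∧ r c' = r c :=
    ⟨c, hc, rfl⟩
  have hgr : g (r c) = hfex.choose • v := dif_pos hfex
  rw [hgr]
  exact hkey _ c hfex.choose_spec.1 hc hfex.choose_spec.2

end Orbit

/-- For a noetherian commutative ring `o`, the category of smooth
`o`-representations of `B₀Z` is noetherian: any `o[B₀Z]`-submodule of a finitely generated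
smooth representation is finitely generated. -/
theorem statement11
    (o : Type) [CommRing o] [IsNoetherianRing o]
    (F : Type) [Field F] [TopologicalSpace F] [IsTopologicalRing F] (LF : NALF F)
    :
    ∀ (W : Type) [AddCommGroup W] [Module o W] [DistribMulAction (↥(B0Zgr F LF)) W]
      [SMulCommClass (↥(B0Zgr F LF)) o W],
      IsSmoothRep o (↥(B0Zgr F LF)) W →
      (∃ X : Finset W, gspan o W (Set.univ : Set ↥(B0Zgr F LF)) (X : Set W) = ⊤) →
      ∀ N : Submodule o W, IsStableSub o W (Set.univ : Set ↥(B0Zgr F LF)) N →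
        IsFGOver o W (Set.univ : Set ↥(B0Zgr F LF)) N := by
  intro W _ _ _ _ hsm hfg N hN
  refine abstract_fg o (zetaH F LF)
    {h : ↥(B0Zgr F LF) | (h : GL (Fin 2) F) ∈ Kgr F LF.O} ?_ ?_ hfg N hN
  · intro h
    obtain ⟨c, hc, m, hm⟩ := decompB0Z F LF h
    exact ⟨c, hc, m, hm⟩
  · intro v
    exact orbit_finite LF v (hsm v)
end
end
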